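/- arXiv:2412.10979 — 11 statements merged into one kernel-verified Lean document; each statement's English description precedes it below -/
import Mathlib

section
/- Let m, n, h be positive integers, b > 0, ν > 0, λ₂ > 0. For l = 1, …, h and i = 1, …, m let A_l^i ∈ ℝ^{n×n} be symmetric with 0 ⪯ A_l^i ⪯ b·I_n, and let A_l = diag(A_l^1, …, A_l^m) ∈ ℝ^{mn×mn} be the block-diagonal matrix with these blocks. Let L ∈ ℝ^{m×m} be symmetric positive semidefinite with L𝟙 = 0 and xᵀLx ≥ λ₂‖x‖² for every x ∈ ℝ^m orthogonal to the all-ones vector 𝟙. Then λ_min(∑_{l=1}^h (A_l + ν·(L ⊗ I_n))) ≥ (ν λ₂ / (m(2b + ν λ₂))) · λ_min(∑_{i=1}^m ∑_{l=1}^h A_l^i). -/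
open Matrix
open scoped Kronecker

section Helpers

lemma symm_dot' {k : ℕ} (M : Matrix (Fin k) (Fin k) ℝ) (hM : Mᵀ = M) (v w : Fin k → ℝ) :
    v ⬝ᵥ (M *ᵥ w) = w ⬝ᵥ (M *ᵥ v) := by
  rw [Matrix.dotProduct_mulVec, ← Matrix.mulVec_transpose, hM, dotProduct_comm]

lemma cs_psd' {k : ℕ} (M : Matrix (Fin k) (Fin k) ℝ) (hM : M.PosSemidef) (v w : Fin k → ℝ) :
    (v ⬝ᵥ (M *ᵥ w))^2 ≤ (v ⬝ᵥ (M *ᵥ v)) * (w ⬝ᵥ (M *ᵥ w)) := by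
  have hMt : Mᵀ = M := by
    rw [← Matrix.conjTranspose_eq_transpose_of_trivial]; exact hM.1
  have key : ∀ r : ℝ, 0 ≤ (w ⬝ᵥ (M *ᵥ w)) * (r*r) + (2 * (v ⬝ᵥ (M *ᵥ w))) * r + v ⬝ᵥ (M *ᵥ v) := by
    intro r
    have h0 := hM.dotProduct_mulVec_nonneg (v + r • w)
    simp only [star_trivial, Matrix.mulVec_add, Matrix.mulVec_smul, dotProduct_add,
      add_dotProduct, dotProduct_smul, smul_dotProduct, smul_eq_mul] at h0
    have hsym : w ⬝ᵥ (M *ᵥ v) = v ⬝ᵥ (M *ᵥ w) := symm_dot' M hMt w v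
    rw [hsym] at h0
    nlinarith [h0]
  have hd := discrim_le_zero key
  simp only [discrim] at hd
  nlinarith [hd]

lemma keyineq' (B g mm t u d s e : ℝ) (hB : 0 < B) (hg : 0 < g) (hmm : 0 < mm)
    (hd : 0 ≤ d) (hBd : e^2 = B*d)
    (htu : t*u ≤ (s+e)^2) (htm : t ≤ mm*B) :
    g/(mm*(2*B+g)) * (t*(mm*u+d)) ≤ s^2 + g*d := by
  rw [div_mul_eq_mul_div, div_le_iff₀ (by positivity)]
  have h5 : g^2*e^2 = g^2*(B*d) := by rw [hBd]
  have h1 : 2*g*s*e ≤ 2*B*s^2 + g^2*d := by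
    have h2 : B*(2*g*s*e) ≤ B*(2*B*s^2 + g^2*d) := by
      nlinarith [sq_nonneg (B*s - g*e), sq_nonneg (B*s), h5]
    exact le_of_mul_le_mul_left h2 hB
  have h3 : t*d ≤ mm*(B*d) := by nlinarith
  have h4 : g*(mm*(t*u)) ≤ g*(mm*((s+e)^2)) :=
    mul_le_mul_of_nonneg_left (mul_le_mul_of_nonneg_left htu hmm.le) hg.le
  have h7 : g*(t*d) ≤ g*(mm*(B*d)) := mul_le_mul_of_nonneg_left h3 hg.le
  have h8 : mm*(2*g*s*e) ≤ mm*(2*B*s^2 + g^2*d) := mul_le_mul_of_nonneg_left h1 hmm.le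
  have h9 : g*mm*e^2 = g*mm*(B*d) := by rw [hBd]
  nlinarith [h4, h7, h8, h9]

lemma quad_block' {m n h : ℕ} (A : Fin h → Fin m → Matrix (Fin n) (Fin n) ℝ) (l : Fin h)
    (x : Fin m × Fin n → ℝ) :
    x ⬝ᵥ ((Matrix.of (fun p q : Fin m × Fin n =>
        if p.1 = q.1 then A l p.1 p.2 q.2 else 0)) *ᵥ x)
      = ∑ i, (fun j => x (i,j)) ⬝ᵥ (A l i *ᵥ (fun j => x (i,j))) := by
  simp [dotProduct, Matrix.mulVec, Fintype.sum_prod_type, ite_mul, zero_mul,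
    Finset.sum_ite_eq, Finset.mul_sum]

lemma quad_kron' {m n : ℕ} (L : Matrix (Fin m) (Fin m) ℝ) (x : Fin m × Fin n → ℝ) :
    x ⬝ᵥ ((L ⊗ₖ (1 : Matrix (Fin n) (Fin n) ℝ)) *ᵥ x)
      = ∑ j, (fun i => x (i,j)) ⬝ᵥ (L *ᵥ (fun i => x (i,j))) := by
  simp [dotProduct, Matrix.mulVec, Fintype.sum_prod_type, Matrix.kroneckerMap_apply,
    Matrix.one_apply, mul_ite, ite_mul, zero_mul, mul_zero, Finset.sum_ite_eq, Finset.mul_sum]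
  rw [Finset.sum_comm]

lemma sum_mulVec' {ι k : Type*} [Fintype k] (s : Finset ι) (M : ι → Matrix k k ℝ) (v : k → ℝ) :
    (∑ i ∈ s, M i) *ᵥ v = ∑ i ∈ s, (M i *ᵥ v) := by
  ext j
  simp [Matrix.mulVec, dotProduct, Matrix.sum_apply, Finset.sum_mul, Finset.sum_apply]
  exact Finset.sum_comm

lemma dot_sum' {ι k : Type*} [Fintype k] (s : Finset ι) (v : k → ℝ) (w : ι → k → ℝ) :
    v ⬝ᵥ (∑ i ∈ s, w i) = ∑ i ∈ s, v ⬝ᵥ (w i) := by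
  simp only [dotProduct, Finset.sum_apply, Finset.mul_sum]
  exact Finset.sum_comm

end Helpers

/-- The paper's Lemma 5.3: for block-diagonal matrices `A_l = diag(A_l^1, …, A_l^m)` with
`0 ⪯ A_l^i ⪯ b Iₙ` and a connected-graph Laplacian `L` (symmetric PSD, `L𝟙 = 0`, spectral gap
`lam₂` on the orthogonal complement of `𝟙`),
`λ_min(∑ₗ (A_l + ν L ⊗ Iₙ)) ≥ (ν lam₂ / (m(2b + ν lam₂))) λ_min(∑ᵢ∑ₗ A_l^i)`, where the
eigenvalue bounds are expressed via the positive semidefinite order. -/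
theorem stmt6 (m n h : ℕ) (hm : 0 < m) (hn : 0 < n) (hh : 0 < h)
    (b ν lam₂ : ℝ) (hb : 0 < b) (hν : 0 < ν) (hlam₂ : 0 < lam₂)
    (A : Fin h → Fin m → Matrix (Fin n) (Fin n) ℝ)
    (hA : ∀ l i, (A l i).PosSemidef)
    (hAb : ∀ l i, (b • (1 : Matrix (Fin n) (Fin n) ℝ) - A l i).PosSemidef)
    (L : Matrix (Fin m) (Fin m) ℝ)
    (hL : L.PosSemidef)
    (hL1 : L *ᵥ (fun _ => 1) = 0)
    (hgap : ∀ x : Fin m → ℝ, x ⬝ᵥ (fun _ => (1 : ℝ)) = 0 →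
      lam₂ * (x ⬝ᵥ x) ≤ x ⬝ᵥ (L *ᵥ x)) :
    ∀ t : ℝ,
      ((∑ i, ∑ l, A l i) - t • (1 : Matrix (Fin n) (Fin n) ℝ)).PosSemidef →
      ((∑ l, (Matrix.of (fun p q : Fin m × Fin n =>
            if p.1 = q.1 then A l p.1 p.2 q.2 else 0) +
          ν • (L ⊗ₖ (1 : Matrix (Fin n) (Fin n) ℝ)))) -
        (ν * lam₂ / (m * (2 * b + ν * lam₂)) * t) •
          (1 : Matrix (Fin m × Fin n) (Fin m × Fin n) ℝ)).PosSemidef := by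
  intro t hpsd
  have hm0 : (0:ℝ) < (m:ℝ) := by exact_mod_cast hm
  have hh0 : (0:ℝ) < (h:ℝ) := by exact_mod_cast hh
  have hAs : ∀ l i (p q : Fin n), A l i p q = A l i q p := by
    intro l i p q
    have := (hA l i).1.apply q p
    simpa using this
  have hLs : ∀ i i', L i i' = L i' i := by
    intro i i'
    have := hL.1.apply i' i
    simpa using this
  have hLt : Lᵀ = L := by
    rw [← Matrix.conjTranspose_eq_transpose_of_trivial]; exact hL.1
  refine Matrix.PosSemidef.of_dotProduct_mulVec_nonneg ?_ ?_
  · -- Hermitian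
    rw [Matrix.IsHermitian, Matrix.conjTranspose_eq_transpose_of_trivial]
    ext ⟨i, j⟩ ⟨i', j'⟩
    simp only [Matrix.transpose_apply, Matrix.sub_apply, Matrix.smul_apply, Matrix.one_apply,
      Matrix.sum_apply, Matrix.add_apply, Matrix.of_apply, Matrix.kroneckerMap_apply,
      smul_eq_mul, Prod.mk.injEq]
    congr 1
    · refine Finset.sum_congr rfl fun l _ => ?_
      congr 1
      · by_cases hii : i = i'
        · subst hii; simp [hAs]
        · have hii' : ¬ i' = i := fun hc => hii hc.symm
          simp [hii, hii']
      · by_cases hjj : j = j'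
        · subst hjj; simp [hLs]
        · have hjj' : ¬ j' = j := fun hc => hjj hc.symm
          simp [hjj, hjj']
    · by_cases hii : i = i'
      · by_cases hjj : j = j'
        · subst hii; subst hjj; simp
        · have hjj' : ¬ j' = j := fun hc => hjj hc.symm
          simp [hjj, hjj']
      · have hii' : ¬ i' = i := fun hc => hii hc.symm
        simp [hii, hii']
  · -- quadratic form
    intro x
    rw [show star x = x from funext fun _ => star_trivial _]
    set c : ℝ := ν * lam₂ / (m * (2 * b + ν * lam₂)) with hc
    set xr : Fin m → Fin n → ℝ := fun i j => x (i,j) with hxr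
    set xbar : Fin n → ℝ := fun j => (∑ i, x (i,j)) / m with hxbar
    set dl : Fin m → Fin n → ℝ := fun i j => x (i,j) - xbar j with hdl
    set S : ℝ := ∑ l, ∑ i, xr i ⬝ᵥ (A l i *ᵥ xr i) with hS
    set E : ℝ := ∑ l, ∑ i, dl i ⬝ᵥ (A l i *ᵥ dl i) with hE
    set T : ℝ := ∑ l, ∑ i, xbar ⬝ᵥ (A l i *ᵥ xbar) with hT
    set u : ℝ := xbar ⬝ᵥ xbar with hu
    set dd : ℝ := ∑ i, dl i ⬝ᵥ dl i with hdd
    set Q : ℝ := ∑ j, (fun i => x (i,j)) ⬝ᵥ (L *ᵥ (fun i => x (i,j))) with hQdef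
    -- Step A : expansion of the quadratic form
    have hexp : x ⬝ᵥ (((∑ l, (Matrix.of (fun p q : Fin m × Fin n =>
            if p.1 = q.1 then A l p.1 p.2 q.2 else 0) +
          ν • (L ⊗ₖ (1 : Matrix (Fin n) (Fin n) ℝ)))) -
        (c * t) • (1 : Matrix (Fin m × Fin n) (Fin m × Fin n) ℝ)) *ᵥ x)
        = S + (h:ℝ) * (ν * Q) - c * t * (x ⬝ᵥ x) := by
      rw [Matrix.sub_mulVec, dotProduct_sub, sum_mulVec', dot_sum' _ _ _]
      rw [Matrix.smul_mulVec, Matrix.one_mulVec, dotProduct_smul]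
      congr 1
      · rw [Finset.sum_congr rfl (fun l _ => by
          rw [Matrix.add_mulVec, dotProduct_add, Matrix.smul_mulVec,
            dotProduct_smul, quad_block' A l x, quad_kron' L x])]
        rw [Finset.sum_add_distrib, Finset.sum_const, Finset.card_univ, Fintype.card_fin]
        simp [smul_eq_mul, hS, hQdef]
        rfl
    -- Step B : nonnegativity
    have hSnn : 0 ≤ S := by
      refine Finset.sum_nonneg fun l _ => Finset.sum_nonneg fun i _ => ?_
      simpa using (hA l i).dotProduct_mulVec_nonneg (xr i)
    have hEnn : 0 ≤ E := by
      refine Finset.sum_nonneg fun l _ => Finset.sum_nonneg fun i _ => ?_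
      simpa using (hA l i).dotProduct_mulVec_nonneg (dl i)
    -- Step C : each column of dl sums to zero
    have hd0 : ∀ j, ∑ i, dl i j = 0 := by
      intro j
      simp only [hdl, hxbar]
      rw [Finset.sum_sub_distrib, Finset.sum_const, Finset.card_univ, Fintype.card_fin]
      rw [nsmul_eq_mul]
      field_simp
      simp
    -- Step D : norm splitting
    have hxx : x ⬝ᵥ x = (m:ℝ) * u + dd := by
      have hsplit : ∀ i j, x (i,j) = xbar j + dl i j := by
        intro i j; simp [hdl]
      calc x ⬝ᵥ x = ∑ j, ∑ i, x (i,j) * x (i,j) := by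
            rw [dotProduct, Fintype.sum_prod_type, Finset.sum_comm]
        _ = ∑ j, ((m:ℝ) * (xbar j * xbar j) + 2 * xbar j * (∑ i, dl i j)
              + ∑ i, dl i j * dl i j) := by
            refine Finset.sum_congr rfl fun j _ => ?_
            have hstep : ∀ i : Fin m, x (i,j) * x (i,j)
                = xbar j * xbar j + (2 * xbar j * dl i j + dl i j * dl i j) := by
              intro i; rw [hsplit i j]; ring
            rw [Finset.sum_congr rfl fun i _ => hstep i, Finset.sum_add_distrib,
              Finset.sum_add_distrib, Finset.sum_const, Finset.card_univ, Fintype.card_fin,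
              nsmul_eq_mul, ← Finset.mul_sum]
            ring
        _ = (m:ℝ) * u + dd := by
            simp only [hd0, mul_zero, add_zero]
            rw [Finset.sum_add_distrib, ← Finset.mul_sum]
            have hu' : u = ∑ j, xbar j * xbar j := hu
            have hdd' : dd = ∑ j, ∑ i, dl i j * dl i j := by
              rw [hdd]
              have : ∀ i, dl i ⬝ᵥ dl i = ∑ j, dl i j * dl i j := fun i => rfl
              rw [Finset.sum_congr rfl fun i _ => this i]
              exact Finset.sum_comm
            rw [hu', hdd']
    -- Step E : spectral gap bound
    have hQ : lam₂ * dd ≤ Q := by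
      have hterm : ∀ j, lam₂ * ((fun i => dl i j) ⬝ᵥ (fun i => dl i j))
          ≤ (fun i => x (i,j)) ⬝ᵥ (L *ᵥ (fun i => x (i,j))) := by
        intro j
        have horth : (fun i => dl i j) ⬝ᵥ (fun _ => (1:ℝ)) = 0 := by
          simpa [dotProduct] using hd0 j
        have hy : (fun i => x (i,j)) = (fun i => dl i j) + (xbar j) • (fun _ => (1:ℝ)) := by
          funext i; simp [hdl]
        have hquad : (fun i => x (i,j)) ⬝ᵥ (L *ᵥ (fun i => x (i,j)))
            = (fun i => dl i j) ⬝ᵥ (L *ᵥ (fun i => dl i j)) := by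
          rw [hy, Matrix.mulVec_add, Matrix.mulVec_smul, hL1, smul_zero, add_zero,
            add_dotProduct, smul_dotProduct]
          rw [symm_dot' L hLt (fun _ => (1:ℝ)) (fun i => dl i j), Matrix.dotProduct_mulVec,
            ← Matrix.mulVec_transpose, hLt, hL1]
          simp
        rw [hquad]
        exact hgap _ horth
      have hddswap : dd = ∑ j, (fun i => dl i j) ⬝ᵥ (fun i => dl i j) := by
        simp only [hdd, dotProduct]
        exact Finset.sum_comm
      calc lam₂ * dd = ∑ j, lam₂ * ((fun i => dl i j) ⬝ᵥ (fun i => dl i j)) := by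
            rw [hddswap, Finset.mul_sum]
        _ ≤ Q := Finset.sum_le_sum fun j _ => hterm j
    -- Step F : t * u ≤ T
    have hTub : t * u ≤ T := by
      have h0 := hpsd.dotProduct_mulVec_nonneg xbar
      rw [show star xbar = xbar from funext fun _ => star_trivial _] at h0
      rw [Matrix.sub_mulVec, dotProduct_sub, sum_mulVec', dot_sum' _ _ _,
        Matrix.smul_mulVec, Matrix.one_mulVec, dotProduct_smul] at h0
      have heq : ∑ i, xbar ⬝ᵥ ((∑ l, A l i) *ᵥ xbar) = T := by
        rw [hT, Finset.sum_comm]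
        exact Finset.sum_congr rfl fun i _ => by
          rw [sum_mulVec', dot_sum' _ _ _]
      rw [heq] at h0
      simp only [smul_eq_mul] at h0
      linarith [h0]
    -- Step G : E ≤ h * b * dd
    have hEb : E ≤ (h:ℝ) * (b * dd) := by
      have hterm : ∀ l i, dl i ⬝ᵥ (A l i *ᵥ dl i) ≤ b * (dl i ⬝ᵥ dl i) := by
        intro l i
        have h0 := (hAb l i).dotProduct_mulVec_nonneg (dl i)
        rw [show star (dl i) = dl i from funext fun _ => star_trivial _] at h0
        rw [Matrix.sub_mulVec, dotProduct_sub, Matrix.smul_mulVec,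
          Matrix.one_mulVec, dotProduct_smul] at h0
        simp only [smul_eq_mul] at h0
        linarith [h0]
      calc E ≤ ∑ _l : Fin h, ∑ i, b * (dl i ⬝ᵥ dl i) :=
            Finset.sum_le_sum fun l _ => Finset.sum_le_sum fun i _ => hterm l i
        _ = (h:ℝ) * (b * dd) := by
            rw [Finset.sum_const, Finset.card_univ, Fintype.card_fin, nsmul_eq_mul,
              ← Finset.mul_sum, hdd]
    -- Step H : t ≤ m * (h * b)
    have htm : t ≤ (m:ℝ) * ((h:ℝ) * b) := by
      set j0 : Fin n := ⟨0, hn⟩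
      set v : Fin n → ℝ := Pi.single j0 1 with hv
      have hquadv : ∀ (M : Matrix (Fin n) (Fin n) ℝ), v ⬝ᵥ (M *ᵥ v) = M j0 j0 := by
        intro M
        simp [hv, dotProduct, Matrix.mulVec, Pi.single_apply, mul_ite, ite_mul,
          mul_zero, zero_mul, Finset.sum_ite_eq]
      have h0 := hpsd.dotProduct_mulVec_nonneg v
      rw [show star v = v from funext fun _ => star_trivial _] at h0
      rw [hquadv] at h0
      simp only [Matrix.sub_apply, Matrix.sum_apply, Matrix.smul_apply, Matrix.one_apply_eq,
        smul_eq_mul, mul_one] at h0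
      have hentry : ∀ l i, A l i j0 j0 ≤ b := by
        intro l i
        have h1 := (hAb l i).dotProduct_mulVec_nonneg v
        rw [show star v = v from funext fun _ => star_trivial _] at h1
        rw [hquadv] at h1
        simp only [Matrix.sub_apply, Matrix.smul_apply, Matrix.one_apply_eq, smul_eq_mul,
          mul_one] at h1
        linarith [h1]
      have hsum : ∑ i : Fin m, ∑ l : Fin h, A l i j0 j0 ≤ (m:ℝ) * ((h:ℝ) * b) := by
        calc ∑ i : Fin m, ∑ l : Fin h, A l i j0 j0
            ≤ ∑ _i : Fin m, ∑ _l : Fin h, b :=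
              Finset.sum_le_sum fun i _ => Finset.sum_le_sum fun l _ => hentry l i
          _ = (m:ℝ) * ((h:ℝ) * b) := by
              simp [Finset.sum_const, Finset.card_univ, nsmul_eq_mul]
      linarith [h0, hsum]
    -- Step I : Cauchy-Schwarz / Minkowski : T ≤ (√S + √E)²
    have hTs : T ≤ (Real.sqrt S + Real.sqrt E)^2 := by
      set f : Fin h × Fin m → ℝ := fun p => Real.sqrt (xr p.2 ⬝ᵥ (A p.1 p.2 *ᵥ xr p.2)) with hf
      set g : Fin h × Fin m → ℝ := fun p => Real.sqrt (dl p.2 ⬝ᵥ (A p.1 p.2 *ᵥ dl p.2)) with hg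
      have hfnn : ∀ p : Fin h × Fin m, (0:ℝ) ≤ xr p.2 ⬝ᵥ (A p.1 p.2 *ᵥ xr p.2) := by
        intro p; simpa using (hA p.1 p.2).dotProduct_mulVec_nonneg (xr p.2)
      have hgnn : ∀ p : Fin h × Fin m, (0:ℝ) ≤ dl p.2 ⬝ᵥ (A p.1 p.2 *ᵥ dl p.2) := by
        intro p; simpa using (hA p.1 p.2).dotProduct_mulVec_nonneg (dl p.2)
      have hf2 : ∀ p : Fin h × Fin m, f p ^ 2 = xr p.2 ⬝ᵥ (A p.1 p.2 *ᵥ xr p.2) :=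
        fun p => Real.sq_sqrt (hfnn p)
      have hg2 : ∀ p : Fin h × Fin m, g p ^ 2 = dl p.2 ⬝ᵥ (A p.1 p.2 *ᵥ dl p.2) :=
        fun p => Real.sq_sqrt (hgnn p)
      have hSf : S = ∑ p : Fin h × Fin m, f p ^ 2 := by
        rw [hS, Fintype.sum_prod_type]
        exact Finset.sum_congr rfl fun l _ => Finset.sum_congr rfl fun i _ => (hf2 (l, i)).symm
      have hEg : E = ∑ p : Fin h × Fin m, g p ^ 2 := by
        rw [hE, Fintype.sum_prod_type]
        exact Finset.sum_congr rfl fun l _ => Finset.sum_congr rfl fun i _ => (hg2 (l, i)).symm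
      -- termwise bound
      have hterm : ∀ p : Fin h × Fin m, xbar ⬝ᵥ (A p.1 p.2 *ᵥ xbar) ≤ (f p + g p)^2 := by
        intro p
        obtain ⟨l, i⟩ := p
        have hxbd : xbar = xr i - dl i := by
          funext j; simp [hdl, hxr]
        have hAt : (A l i)ᵀ = A l i := by
          rw [← Matrix.conjTranspose_eq_transpose_of_trivial]; exact (hA l i).1
        have hexp2 : xbar ⬝ᵥ (A l i *ᵥ xbar)
            = xr i ⬝ᵥ (A l i *ᵥ xr i) - 2 * (xr i ⬝ᵥ (A l i *ᵥ dl i))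
              + dl i ⬝ᵥ (A l i *ᵥ dl i) := by
          rw [hxbd, Matrix.mulVec_sub, dotProduct_sub, sub_dotProduct,
            sub_dotProduct, symm_dot' (A l i) hAt (dl i) (xr i)]
          ring
        have hcs := cs_psd' (A l i) (hA l i) (xr i) (dl i)
        have h1 := hf2 (l, i)
        have h2 := hg2 (l, i)
        have h3 : 0 ≤ f (l, i) := Real.sqrt_nonneg _
        have h4 : 0 ≤ g (l, i) := Real.sqrt_nonneg _
        have h5 : (f (l,i) * g (l,i))^2 = (xr i ⬝ᵥ (A l i *ᵥ xr i)) * (dl i ⬝ᵥ (A l i *ᵥ dl i)) := by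
          rw [mul_pow, h1, h2]
        have habs : |xr i ⬝ᵥ (A l i *ᵥ dl i)| ≤ f (l,i) * g (l,i) := by
          refine abs_le_of_sq_le_sq ?_ (mul_nonneg h3 h4)
          rw [h5]; exact hcs
        have hR : -(f (l,i) * g (l,i)) ≤ xr i ⬝ᵥ (A l i *ᵥ dl i) := by
          have := neg_abs_le (xr i ⬝ᵥ (A l i *ᵥ dl i))
          linarith [habs, this]
        have hsq : (f (l,i) + g (l,i))^2
            = f (l,i)^2 + 2*(f (l,i)*g (l,i)) + g (l,i)^2 := by ring
        rw [hexp2, hsq, h1, h2]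
        linarith [hR]
      have hsumfg : ∑ p : Fin h × Fin m, f p * g p ≤ Real.sqrt S * Real.sqrt E := by
        have hcs2 := Finset.sum_mul_sq_le_sq_mul_sq Finset.univ f g
        have hnn : 0 ≤ ∑ p : Fin h × Fin m, f p * g p :=
          Finset.sum_nonneg fun p _ => mul_nonneg (Real.sqrt_nonneg _) (Real.sqrt_nonneg _)
        have h6 : (∑ p : Fin h × Fin m, f p * g p)^2 ≤ S * E := by
          rw [hSf, hEg]; exact hcs2
        calc ∑ p : Fin h × Fin m, f p * g p
            = Real.sqrt ((∑ p : Fin h × Fin m, f p * g p)^2) := (Real.sqrt_sq hnn).symm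
          _ ≤ Real.sqrt (S * E) := Real.sqrt_le_sqrt h6
          _ = Real.sqrt S * Real.sqrt E := Real.sqrt_mul hSnn E
      calc T = ∑ p : Fin h × Fin m, xbar ⬝ᵥ (A p.1 p.2 *ᵥ xbar) := by
            rw [hT, Fintype.sum_prod_type]
        _ ≤ ∑ p : Fin h × Fin m, (f p + g p)^2 := Finset.sum_le_sum fun p _ => hterm p
        _ = (∑ p : Fin h × Fin m, f p ^2) + 2 * (∑ p : Fin h × Fin m, f p * g p)
              + ∑ p : Fin h × Fin m, g p ^2 := by
            rw [Finset.mul_sum, ← Finset.sum_add_distrib, ← Finset.sum_add_distrib]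
            exact Finset.sum_congr rfl fun p _ => by ring
        _ ≤ S + 2 * (Real.sqrt S * Real.sqrt E) + E := by
            rw [← hSf, ← hEg]
            have := hsumfg
            linarith
        _ = (Real.sqrt S + Real.sqrt E)^2 := by
            rw [add_sq, Real.sq_sqrt hSnn, Real.sq_sqrt hEnn]; ring
    -- Step J : replace √E by √(h*b*dd)
    have hddnn : 0 ≤ dd := by
      refine Finset.sum_nonneg fun i _ => ?_
      exact Finset.sum_nonneg fun j _ => mul_self_nonneg _
    have hTs' : T ≤ (Real.sqrt S + Real.sqrt ((h:ℝ) * (b * dd)))^2 := by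
      have h1 : Real.sqrt E ≤ Real.sqrt ((h:ℝ) * (b * dd)) := Real.sqrt_le_sqrt hEb
      have h2 : Real.sqrt S + Real.sqrt E ≤ Real.sqrt S + Real.sqrt ((h:ℝ) * (b * dd)) := by
        linarith
      have h3 : 0 ≤ Real.sqrt S + Real.sqrt E :=
        add_nonneg (Real.sqrt_nonneg _) (Real.sqrt_nonneg _)
      nlinarith [hTs, h2, h3]
    -- Step K : apply the scalar inequality
    have hBd : (Real.sqrt ((h:ℝ) * (b * dd)))^2 = ((h:ℝ)*b)*dd := by
      rw [Real.sq_sqrt (mul_nonneg (Nat.cast_nonneg h) (mul_nonneg hb.le hddnn))]; ring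
    have htu' : t * u ≤ (Real.sqrt S + Real.sqrt ((h:ℝ) * (b * dd)))^2 := le_trans hTub hTs'
    have htm' : t ≤ (m:ℝ) * ((h:ℝ)*b) := htm
    have hkey := keyineq' ((h:ℝ)*b) ((h:ℝ)*(ν*lam₂)) (m:ℝ) t u dd
        (Real.sqrt S) (Real.sqrt ((h:ℝ) * (b * dd)))
        (mul_pos hh0 hb) (mul_pos hh0 (mul_pos hν hlam₂)) hm0 hddnn hBd htu' htm'
    rw [Real.sq_sqrt hSnn] at hkey
    have hceq : c = ((h:ℝ)*(ν*lam₂)) / ((m:ℝ) * (2*((h:ℝ)*b) + (h:ℝ)*(ν*lam₂))) := by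
      rw [hc]
      have hnl : 0 < ν*lam₂ := mul_pos hν hlam₂
      have d1 : (m:ℝ) * (2*b+ν*lam₂) ≠ 0 := by
        refine ne_of_gt (mul_pos hm0 (by linarith))
      have d2 : (m:ℝ) * (2*((h:ℝ)*b) + (h:ℝ)*(ν*lam₂)) ≠ 0 := by
        refine ne_of_gt (mul_pos hm0 ?_)
        have hb1 : 0 < (h:ℝ)*b := mul_pos hh0 hb
        have hb2 : 0 < (h:ℝ)*(ν*lam₂) := mul_pos hh0 hnl
        linarith
      rw [div_eq_div_iff d1 d2]
      ring
    rw [← hceq] at hkey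
    have hQmul : ((h:ℝ)*ν) * (lam₂*dd) ≤ ((h:ℝ)*ν) * Q :=
      mul_le_mul_of_nonneg_left hQ (mul_nonneg (Nat.cast_nonneg h) hν.le)
    rw [hexp, hxx]
    have e1 : c * t * ((m:ℝ)*u + dd) = c * (t * ((m:ℝ)*u+dd)) := by ring
    have e2 : ((h:ℝ)*(ν*lam₂))*dd = ((h:ℝ)*ν)*(lam₂*dd) := by ring
    have e3 : ((h:ℝ)*ν)*Q = (h:ℝ)*(ν*Q) := by ring
    linarith [hkey, hQmul, e1, e2, e3]
end

section
/- Let a > 0 and k₀ ≥ 0 be real numbers and let l ≤ k be positive integers with a ≤ l + k₀. Then ∏_{i=l}^{k} (1 − a/(i + k₀)) ≤ ((l + k₀)/(k + k₀))^a. -/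
lemma stmt8_aux (k₀ : ℝ) (hk₀ : 0 ≤ k₀) (l : ℕ) (hl : 0 < l) :
    ∀ n : ℕ, l ≤ n →
      Real.log (((n : ℝ) + k₀) / ((l : ℝ) + k₀)) ≤
        ∑ i ∈ Finset.Ico l n, 1 / ((i : ℝ) + k₀) := by
  intro n hn
  induction n, hn using Nat.le_induction with
  | base => simp [div_self (by positivity : ((l : ℝ) + k₀) ≠ 0)]
  | succ n hn ih =>
    have hn0 : (0 : ℝ) < (n : ℝ) + k₀ := by
      have : (1 : ℝ) ≤ (n : ℝ) := by exact_mod_cast hl.trans_le hn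
      linarith
    rw [Finset.sum_Ico_succ_top hn]
    have h1 : Real.log (((n : ℝ) + 1 + k₀) / ((n : ℝ) + k₀)) ≤ 1 / ((n : ℝ) + k₀) := by
      have := Real.log_le_sub_one_of_pos
        (show (0:ℝ) < ((n : ℝ) + 1 + k₀) / ((n : ℝ) + k₀) by positivity)
      have heq : ((n : ℝ) + 1 + k₀) / ((n : ℝ) + k₀) - 1 = 1 / ((n : ℝ) + k₀) := by
        field_simp
        ring
      linarith [this, heq ▸ this]
    have hsplit : Real.log (((n : ℝ) + 1 + k₀) / ((l : ℝ) + k₀)) =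
        Real.log (((n : ℝ) + k₀) / ((l : ℝ) + k₀)) +
          Real.log (((n : ℝ) + 1 + k₀) / ((n : ℝ) + k₀)) := by
      rw [← Real.log_mul (by positivity) (by positivity)]
      congr 1
      field_simp
    push_cast
    rw [hsplit]
    linarith

/-- The `b = 1` case of the paper's Lemma 5.5 (Wang–Ke–Zhang):
`∏_{i=l}^{k} (1 - a/(i + k₀)) ≤ ((l + k₀)/(k + k₀))^a` for `a > 0`, `k₀ ≥ 0`,
`1 ≤ l ≤ k` and `a ≤ l + k₀`. -/
theorem stmt8 (a k₀ : ℝ) (ha : 0 < a) (hk₀ : 0 ≤ k₀)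
    (l k : ℕ) (hl : 0 < l) (hlk : l ≤ k) (hal : a ≤ (l : ℝ) + k₀) :
    ∏ i ∈ Finset.Icc l k, (1 - a / ((i : ℝ) + k₀)) ≤
      (((l : ℝ) + k₀) / ((k : ℝ) + k₀)) ^ a := by
  have hl0 : (0 : ℝ) < (l : ℝ) + k₀ := by
    have : (1 : ℝ) ≤ (l : ℝ) := by exact_mod_cast hl
    linarith
  have hk0 : (0 : ℝ) < (k : ℝ) + k₀ := by
    have : (l : ℝ) ≤ (k : ℝ) := by exact_mod_cast hlk
    linarith
  -- positivity of i + k₀ for i in the interval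
  have hi0 : ∀ i ∈ Finset.Icc l k, (0 : ℝ) < (i : ℝ) + k₀ := by
    intro i hi
    have := (Finset.mem_Icc.mp hi).1
    have : (l : ℝ) ≤ (i : ℝ) := by exact_mod_cast this
    linarith
  -- Step 1: bound product by exp of negative sum
  have h1 : ∏ i ∈ Finset.Icc l k, (1 - a / ((i : ℝ) + k₀)) ≤
      ∏ i ∈ Finset.Icc l k, Real.exp (-(a / ((i : ℝ) + k₀))) := by
    apply Finset.prod_le_prod
    · intro i hi
      have hpos := hi0 i hi
      have hli : (l : ℝ) ≤ (i : ℝ) := by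
        exact_mod_cast (Finset.mem_Icc.mp hi).1
      have : a / ((i : ℝ) + k₀) ≤ 1 := by
        rw [div_le_one hpos]; linarith
      linarith
    · intro i hi
      have := Real.add_one_le_exp (-(a / ((i : ℝ) + k₀)))
      linarith
  rw [← Real.exp_sum] at h1
  have hsum : ∑ i ∈ Finset.Icc l k, -(a / ((i : ℝ) + k₀)) =
      -a * ∑ i ∈ Finset.Icc l k, 1 / ((i : ℝ) + k₀) := by
    rw [Finset.mul_sum]
    apply Finset.sum_congr rfl
    intro i _; field_simp
  rw [hsum] at h1
  -- Step 2: sum lower bound via the aux lemma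
  have haux := stmt8_aux k₀ hk₀ l hl (k + 1) (by omega)
  have hIcc : Finset.Ico l (k + 1) = Finset.Icc l k := by
    ext i; simp [Nat.lt_succ_iff]
  rw [hIcc] at haux
  have hlog : Real.log (((k : ℝ) + k₀) / ((l : ℝ) + k₀)) ≤
      ∑ i ∈ Finset.Icc l k, 1 / ((i : ℝ) + k₀) := by
    refine le_trans ?_ haux
    apply Real.log_le_log (by positivity)
    push_cast
    gcongr
    linarith
  -- Step 3: conclude
  have h2 : Real.exp (-a * ∑ i ∈ Finset.Icc l k, 1 / ((i : ℝ) + k₀)) ≤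
      Real.exp (-a * Real.log (((k : ℝ) + k₀) / ((l : ℝ) + k₀))) := by
    apply Real.exp_le_exp.mpr
    have := mul_le_mul_of_nonneg_left hlog (le_of_lt ha)
    nlinarith
  have h3 : Real.exp (-a * Real.log (((k : ℝ) + k₀) / ((l : ℝ) + k₀))) =
      (((l : ℝ) + k₀) / ((k : ℝ) + k₀)) ^ a := by
    rw [Real.rpow_def_of_pos (by positivity)]
    congr 1
    rw [Real.log_div (by positivity) (by positivity),
        Real.log_div (by positivity) (by positivity)]
    ring
  calc ∏ i ∈ Finset.Icc l k, (1 - a / ((i : ℝ) + k₀)) ≤ _ := h1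
    _ ≤ _ := h2
    _ = _ := h3
end

section
/- Let 0 < b < 1, a > 0, k₀ ≥ 0 be real numbers and let l ≤ k be positive integers with a ≤ (l + k₀)^b. Then ∏_{i=l}^{k} (1 − a/(i + k₀)^b) ≤ exp( (a/(1 − b)) · ((l + k₀)^{1−b} − (k + k₀ + 1)^{1−b}) ). -/
open Real Finset

private lemma key_step (b k₀ : ℝ) (hb0 : 0 < b) (hb1 : b < 1) (x : ℝ) (hx : 0 < x) :
    (x + 1) ^ (1 - b) - x ^ (1 - b) ≤ (1 - b) * x ^ (-b) := by
  have h1 : (x + 1) ^ (1 - b) = x ^ (1 - b) * (1 + 1 / x) ^ (1 - b) := by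
    rw [← Real.mul_rpow (le_of_lt hx) (by positivity)]
    congr 1
    field_simp
  have h2 : (1 + 1 / x) ^ (1 - b) ≤ 1 + (1 - b) * (1 / x) :=
    rpow_one_add_le_one_add_mul_self (by linarith [one_div_pos.mpr hx]) (by linarith) (by linarith)
  have h3 : x ^ (1 - b) * (1 / x) = x ^ (-b) := by
    rw [one_div, ← Real.rpow_neg_one x, ← Real.rpow_add hx]
    ring_nf
  calc (x + 1) ^ (1 - b) - x ^ (1 - b)
      = x ^ (1 - b) * (1 + 1 / x) ^ (1 - b) - x ^ (1 - b) := by rw [h1]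
    _ ≤ x ^ (1 - b) * (1 + (1 - b) * (1 / x)) - x ^ (1 - b) := by
        have := Real.rpow_nonneg (le_of_lt hx) (1 - b)
        nlinarith
    _ = (1 - b) * (x ^ (1 - b) * (1 / x)) := by ring
    _ = (1 - b) * x ^ (-b) := by rw [h3]

private lemma sum_step (b k₀ : ℝ) (hb0 : 0 < b) (hb1 : b < 1) (hk₀ : 0 ≤ k₀)
    (l : ℕ) (hl : 0 < l) : ∀ k, l ≤ k →
    ((k : ℝ) + k₀ + 1) ^ (1 - b) - ((l : ℝ) + k₀) ^ (1 - b) ≤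
      (1 - b) * ∑ i ∈ Finset.Icc l k, ((i : ℝ) + k₀) ^ (-b) := by
  intro k hk
  induction k, hk using Nat.le_induction with
  | base =>
      rw [Finset.Icc_self, Finset.sum_singleton]
      have := key_step b k₀ hb0 hb1 ((l : ℝ) + k₀) (by positivity)
      linarith
  | succ n hn ih =>
      rw [Finset.sum_Icc_succ_top (by omega)]
      have hx : (0 : ℝ) < (n : ℝ) + k₀ + 1 := by positivity
      have := key_step b k₀ hb0 hb1 ((n : ℝ) + 1 + k₀) (by positivity)
      push_cast
      have e1 : ((n : ℝ) + 1 + k₀ + 1) = ((n : ℝ) + 1 + k₀) + 1 := by ring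
      have e2 : ((n : ℝ) + k₀ + 1) = ((n : ℝ) + 1 + k₀) := by ring
      rw [e1]
      rw [e2] at ih
      nlinarith [ih]

/-- The `b ∈ (0,1)` case of the paper's Lemma 5.5 (Wang–Ke–Zhang):
`∏_{i=l}^{k} (1 - a/(i + k₀)^b) ≤ exp((a/(1-b)) ((l + k₀)^{1-b} - (k + k₀ + 1)^{1-b}))`. -/
theorem stmt9 (b a k₀ : ℝ) (hb0 : 0 < b) (hb1 : b < 1) (ha : 0 < a) (hk₀ : 0 ≤ k₀)
    (l k : ℕ) (hl : 0 < l) (hlk : l ≤ k) (hal : a ≤ ((l : ℝ) + k₀) ^ b) :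
    ∏ i ∈ Finset.Icc l k, (1 - a / ((i : ℝ) + k₀) ^ b) ≤
      Real.exp (a / (1 - b) *
        (((l : ℝ) + k₀) ^ (1 - b) - ((k : ℝ) + k₀ + 1) ^ (1 - b))) := by
  have hb' : (0 : ℝ) < 1 - b := by linarith
  -- step 1: product ≤ exp (-a * ∑ (i+k₀)^(-b))
  have step1 : ∏ i ∈ Finset.Icc l k, (1 - a / ((i : ℝ) + k₀) ^ b) ≤
      Real.exp (-a * ∑ i ∈ Finset.Icc l k, ((i : ℝ) + k₀) ^ (-b)) := by
    rw [Finset.mul_sum, Real.exp_sum]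
    apply Finset.prod_le_prod
    · intro i hi
      rw [Finset.mem_Icc] at hi
      have hip : (0 : ℝ) < (i : ℝ) + k₀ := by
        have : (0:ℝ) < (i:ℝ) := by exact_mod_cast (hl.trans_le hi.1)
        linarith
      have hmono : ((l : ℝ) + k₀) ^ b ≤ ((i : ℝ) + k₀) ^ b := by
        apply Real.rpow_le_rpow (by positivity) _ hb0.le
        have : (l : ℝ) ≤ (i : ℝ) := by exact_mod_cast hi.1
        linarith
      have : a / ((i : ℝ) + k₀) ^ b ≤ 1 := by
        rw [div_le_one (by positivity)]
        exact hal.trans hmono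
      linarith
    · intro i hi
      rw [Finset.mem_Icc] at hi
      have hip : (0 : ℝ) < (i : ℝ) + k₀ := by
        have : (0:ℝ) < (i:ℝ) := by exact_mod_cast (hl.trans_le hi.1)
        linarith
      have h1 : -a * ((i : ℝ) + k₀) ^ (-b) = -(a / ((i : ℝ) + k₀) ^ b) := by
        rw [Real.rpow_neg hip.le]; field_simp
      rw [h1]
      have := Real.add_one_le_exp (-(a / ((i : ℝ) + k₀) ^ b))
      linarith
  refine step1.trans (Real.exp_le_exp.mpr ?_)
  have hsum := sum_step b k₀ hb0 hb1 hk₀ l hl k hlk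
  rw [div_mul_eq_mul_div, le_div_iff₀ hb']
  nlinarith [hsum]
end

section
/- Let 0 < b < 1, a > 0, and k₀ ≥ 0 be real numbers. Then the sequence S_k = ∑_{l=1}^{k} ( ∏_{i=l}^{k} (1 − a/(i + k₀)^b) ) · (l + k₀)^{−2b} satisfies S_k = O(k^{−b}) as k → ∞; that is, there exist C > 0 and K such that |S_k| ≤ C·k^{−b} for all k ≥ K. -/
set_option maxHeartbeats 1600000 in
/-- The second assertion of the paper's Lemma 5.5 (Wang–Ke–Zhang): for `0 < b < 1`, `a > 0`
and `k₀ ≥ 0`, the sums `S_k = ∑_{l=1}^{k} (∏_{i=l}^{k} (1 - a/(i + k₀)^b)) (l + k₀)^{-2b}`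
satisfy `S_k = O(k^{-b})`. -/
theorem stmt10 (b a k₀ : ℝ) (hb0 : 0 < b) (hb1 : b < 1) (ha : 0 < a) (hk₀ : 0 ≤ k₀)
    (S : ℕ → ℝ)
    (hS : ∀ k, S k = ∑ l ∈ Finset.Icc 1 k,
      (∏ i ∈ Finset.Icc l k, (1 - a / ((i : ℝ) + k₀) ^ b)) * ((l : ℝ) + k₀) ^ (-(2 * b))) :
    ∃ C : ℝ, 0 < C ∧ ∃ K : ℕ, ∀ k : ℕ, K ≤ k → |S k| ≤ C * (k : ℝ) ^ (-b) := by
  -- the basic one-step recursion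
  have hrec : ∀ k : ℕ, S (k+1) = (1 - a / (((k : ℝ) + 1) + k₀) ^ b)
      * (S k + (((k : ℝ) + 1) + k₀) ^ (-(2 * b))) := by
    intro k
    have h1 := hS (k+1)
    rw [Finset.sum_Icc_succ_top (by omega : 1 ≤ k+1)] at h1
    have h3 : ∀ l ∈ Finset.Icc 1 k,
        (∏ i ∈ Finset.Icc l (k+1), (1 - a / ((i : ℝ) + k₀) ^ b)) * ((l : ℝ) + k₀) ^ (-(2 * b))
        = ((∏ i ∈ Finset.Icc l k, (1 - a / ((i : ℝ) + k₀) ^ b)) * ((l : ℝ) + k₀) ^ (-(2 * b)))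
          * (1 - a / (((k+1 : ℕ) : ℝ) + k₀) ^ b) := by
      intro l hl
      rw [Finset.prod_Icc_succ_top (by simp at hl; omega : l ≤ k+1)]
      ring
    rw [Finset.sum_congr rfl h3, ← Finset.sum_mul, ← hS k, Finset.Icc_self,
      Finset.prod_singleton] at h1
    push_cast at h1
    rw [h1]; ring
  clear hS
  have hb2 : (0:ℝ) < 1 - b := by linarith
  have h1k₀ : (0:ℝ) < 1 + k₀ := by linarith
  obtain ⟨a', ha'def⟩ : ∃ a' : ℝ, a' = a / (1 + k₀) ^ b := ⟨_, rfl⟩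
  have ha' : 0 < a' := ha'def ▸ div_pos ha (Real.rpow_pos_of_pos h1k₀ b)
  obtain ⟨T, hTdef⟩ : ∃ T : ℝ, T = max (max ((4 / a') ^ (1 / (1 - b))) (a ^ (1 / b))) 2 :=
    ⟨_, rfl⟩
  have key : ∀ x : ℝ, T ≤ x → (2 ≤ x ∧ a ≤ x ^ b ∧ x ^ (b - 1) ≤ a' / 4) := by
    intro x hx
    rw [hTdef] at hx
    have hx2 : (2:ℝ) ≤ x := le_trans (le_max_right _ _) hx
    have hx0 : (0:ℝ) < x := by linarith
    refine ⟨hx2, ?_, ?_⟩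
    · have h1 : a ^ (1/b) ≤ x :=
        le_trans (le_trans (le_max_right _ _) (le_max_left _ _)) hx
      have h2 : (a ^ (1/b)) ^ b = a := by
        rw [← Real.rpow_mul ha.le, one_div, inv_mul_cancel₀ hb0.ne', Real.rpow_one]
      calc a = (a ^ (1/b)) ^ b := h2.symm
        _ ≤ x ^ b := Real.rpow_le_rpow (Real.rpow_nonneg ha.le _) h1 hb0.le
    · have h1 : (4/a') ^ (1/(1-b)) ≤ x :=
        le_trans (le_trans (le_max_left _ _) (le_max_left _ _)) hx
      have h3 : ((4/a') ^ (1/(1-b))) ^ (1-b) = 4/a' := by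
        rw [← Real.rpow_mul (by positivity), one_div,
          inv_mul_cancel₀ (by linarith : (1:ℝ) - b ≠ 0), Real.rpow_one]
      have h2 : 4/a' ≤ x ^ (1-b) := by
        calc 4/a' = ((4/a') ^ (1/(1-b))) ^ (1-b) := h3.symm
          _ ≤ x ^ (1-b) := Real.rpow_le_rpow (by positivity) h1 (by linarith)
      have h4 : x ^ (b-1) = (x ^ (1-b))⁻¹ := by
        rw [show b - 1 = -(1-b) by ring, Real.rpow_neg hx0.le]
      rw [h4]
      calc (x ^ (1-b))⁻¹ ≤ (4/a')⁻¹ := inv_anti₀ (by positivity) h2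
        _ = a'/4 := by field_simp
  obtain ⟨K, hKT⟩ : ∃ K : ℕ, T ≤ (K:ℝ) := ⟨⌈T⌉₊, Nat.le_ceil T⟩
  obtain ⟨hK2, -, -⟩ := key (K:ℝ) hKT
  have hK0 : (0:ℝ) < K := by linarith
  obtain ⟨C, hC0, hCa, hCS⟩ :
      ∃ C : ℝ, 0 < C ∧ 4 ≤ a' * C ∧ |S K| * (K:ℝ) ^ b + 1 ≤ C := by
    refine ⟨max (|S K| * (K:ℝ) ^ b + 1) (4/a'), ?_, ?_, le_max_left _ _⟩
    · exact lt_of_lt_of_le (by positivity) (le_max_right _ _)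
    · have h1 : 4/a' ≤ max (|S K| * (K:ℝ) ^ b + 1) (4/a') := le_max_right _ _
      rw [div_le_iff₀ ha'] at h1
      linarith
  refine ⟨C, hC0, K, ?_⟩
  intro k hk
  induction k, hk using Nat.le_induction with
  | base =>
    have h1 : |S K| * ((K:ℝ) ^ b * (K:ℝ) ^ (-b)) = |S K| := by
      rw [← Real.rpow_add hK0]; simp
    have h0 : 0 ≤ |S K| * (K:ℝ) ^ b := by positivity
    calc |S K| = |S K| * ((K:ℝ) ^ b * (K:ℝ) ^ (-b)) := h1.symm
      _ = (|S K| * (K:ℝ) ^ b) * (K:ℝ) ^ (-b) := by ring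
      _ ≤ C * (K:ℝ) ^ (-b) := by
          apply mul_le_mul_of_nonneg_right _ (Real.rpow_nonneg hK0.le _)
          linarith
  | succ k hk ih =>
    have hkK : (K:ℝ) ≤ (k:ℝ) := Nat.cast_le.mpr hk
    have hk0 : (0:ℝ) < (k:ℝ) := by linarith
    push_cast
    obtain ⟨x, hxdef⟩ : ∃ x : ℝ, x = (k:ℝ) + 1 := ⟨_, rfl⟩
    rw [← hxdef]
    have hx0 : (0:ℝ) < x := by rw [hxdef]; linarith
    have hxk : (k:ℝ) ≤ x := by rw [hxdef]; linarith
    have hxT : T ≤ x := by rw [hxdef]; linarith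
    obtain ⟨hx2, -, hxb1⟩ := key x hxT
    have hxk₀T : T ≤ x + k₀ := by linarith
    obtain ⟨-, hxka, -⟩ := key (x + k₀) hxk₀T
    have hxk0 : (0:ℝ) < x + k₀ := by linarith
    have hrec' := hrec k
    rw [← hxdef] at hrec'
    clear hrec
    obtain ⟨A, hAdef⟩ : ∃ A : ℝ, A = a / (x + k₀) ^ b := ⟨_, rfl⟩
    obtain ⟨c, hcdef⟩ : ∃ c : ℝ, c = (x + k₀) ^ (-(2*b)) := ⟨_, rfl⟩
    rw [← hAdef, ← hcdef] at hrec'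
    have hA0 : 0 ≤ A := by rw [hAdef]; positivity
    have hA1 : A ≤ 1 := hAdef ▸ (div_le_one (Real.rpow_pos_of_pos hxk0 b)).mpr hxka
    obtain ⟨u, hudef⟩ : ∃ u : ℝ, u = x ^ (-b) := ⟨_, rfl⟩
    have hu0 : 0 < u := hudef ▸ Real.rpow_pos_of_pos hx0 _
    -- lower bound for A
    have hAlow : a' * u ≤ A := by
      have hle : x + k₀ ≤ x * (1 + k₀) := by
        nlinarith [mul_nonneg (by linarith : (0:ℝ) ≤ x - 1) hk₀]
      have h5 : (x+k₀) ^ b ≤ x ^ b * (1+k₀) ^ b := by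
        rw [← Real.mul_rpow hx0.le h1k₀.le]
        exact Real.rpow_le_rpow hxk0.le hle hb0.le
      have h6 : a / (x ^ b * (1+k₀) ^ b) ≤ A := by
        rw [hAdef]
        exact div_le_div_of_nonneg_left ha.le (Real.rpow_pos_of_pos hxk0 b) h5
      have h7 : a' * u = a / (x ^ b * (1+k₀) ^ b) := by
        rw [hudef, ha'def, Real.rpow_neg hx0.le, div_eq_mul_inv, div_eq_mul_inv, mul_inv]
        ring
      linarith [h7 ▸ h6]
    -- bound for the perturbation term
    have hc0 : 0 ≤ c := hcdef ▸ Real.rpow_nonneg hxk0.le _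
    have hcle : c ≤ u * u := by
      have h1 : (x+k₀) ^ (-(2*b)) ≤ x ^ (-(2*b)) :=
        Real.rpow_le_rpow_of_nonpos hx0 (by linarith) (by linarith)
      have h2 : x ^ (-(2*b)) = u * u := by
        rw [hudef, ← Real.rpow_add hx0]; ring_nf
      rw [hcdef]; linarith [h2 ▸ h1]
    -- bound k^(-b) in terms of u
    have hkb : (k:ℝ) ^ (-b) ≤ u * (1 + 2/x) := by
      have e1 : (k:ℝ) ^ (-b) = u * (x/(k:ℝ)) ^ b := by
        rw [hudef, Real.div_rpow hx0.le hk0.le, Real.rpow_neg hx0.le,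
          Real.rpow_neg hk0.le]
        have h8 : (x:ℝ) ^ b ≠ 0 := (Real.rpow_pos_of_pos hx0 b).ne'
        field_simp
      have e2 : (x/(k:ℝ)) ^ b ≤ x/(k:ℝ) := by
        have h1x : 1 ≤ x/(k:ℝ) := (one_le_div hk0).mpr hxk
        calc (x/(k:ℝ)) ^ b ≤ (x/(k:ℝ)) ^ (1:ℝ) :=
              Real.rpow_le_rpow_of_exponent_le h1x hb1.le
          _ = x/(k:ℝ) := Real.rpow_one _
      have e3 : x/(k:ℝ) ≤ 1 + 2/x := by
        rw [show (1:ℝ) + 2/x = (x+2)/x by field_simp, div_le_div_iff₀ hk0 hx0, hxdef]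
        nlinarith
      calc (k:ℝ) ^ (-b) = u * (x/(k:ℝ)) ^ b := e1
        _ ≤ u * (x/(k:ℝ)) := mul_le_mul_of_nonneg_left e2 hu0.le
        _ ≤ u * (1 + 2/x) := mul_le_mul_of_nonneg_left e3 hu0.le
    -- one step of the recursion
    have hstep : |S (k+1)| ≤ (1-A) * (|S k| + c) := by
      rw [hrec', abs_mul, abs_of_nonneg (by linarith : (0:ℝ) ≤ 1 - A)]
      apply mul_le_mul_of_nonneg_left _ (by linarith)
      calc |S k + c| ≤ |S k| + |c| := abs_add_le _ _
        _ = |S k| + c := by rw [abs_of_nonneg hc0]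
    -- key scalar inequality
    have h1x : 1/x ≤ a'/4 * u := by
      have h8 : x ^ (b-1) * u = 1/x := by
        rw [hudef, ← Real.rpow_add hx0, show b - 1 + -b = -1 by ring,
          Real.rpow_neg_one, one_div]
      calc 1/x = x ^ (b-1) * u := h8.symm
        _ ≤ a'/4 * u := mul_le_mul_of_nonneg_right hxb1 hu0.le
    have hD : 2*C/x + u ≤ A*C := by
      have d2 : 2*C*(1/x) ≤ 2*C*(a'/4*u) :=
        mul_le_mul_of_nonneg_left h1x (by positivity)
      have d3 : u ≤ a'*C/4 * u := by nlinarith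
      have d4 : a'*u*C ≤ A*C := mul_le_mul_of_nonneg_right hAlow hC0.le
      have d5 : 2*C*(a'/4*u) + a'*C/4*u ≤ a'*u*C := by
        nlinarith [mul_nonneg (mul_nonneg ha'.le hC0.le) hu0.le]
      have d1 : 2*C/x = 2*C*(1/x) := by ring
      linarith
    have hDpos : 0 ≤ 2*C/x + u := by positivity
    have hfin : (1-A) * (C + (2*C/x + u)) ≤ C := by
      nlinarith [mul_nonneg hA0 hDpos]
    calc |S (k+1)| ≤ (1-A) * (|S k| + c) := hstep
      _ ≤ (1-A) * (C * (u * (1 + 2/x)) + u * u) := by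
          apply mul_le_mul_of_nonneg_left _ (by linarith)
          have h9 : |S k| ≤ C * (u * (1 + 2/x)) := by
            calc |S k| ≤ C * (k:ℝ) ^ (-b) := ih
              _ ≤ C * (u * (1 + 2/x)) := mul_le_mul_of_nonneg_left hkb hC0.le
          linarith
      _ = u * ((1-A) * (C + (2*C/x + u))) := by ring
      _ ≤ u * C := mul_le_mul_of_nonneg_left hfin hu0.le
      _ = C * x ^ (-b) := by rw [hudef]; ring
end

section
/- Let a, b be real numbers with a > b > 0. Then the sequence T_k = ∑_{l=1}^{k} ( ∏_{i=l+1}^{k} (1 − a/i) ) · l^{−(1+b)} satisfies T_k = O(k^{−b}) as k → ∞; that is, there exist C > 0 and K such that |T_k| ≤ C·k^{−b} for all k ≥ K. -/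
/-- Key one-step inequality for the induction. -/
lemma stmt11_key (a b C : ℝ) (hb : 0 < b) (hab : b < a)
    (hC : 2/(a-b) ≤ C) (m : ℝ) (hm : 2*a/(a-b) + a + b + 2 ≤ m) :
    C * (1 - a/(m+1)) * m ^ (-b) + (m+1) ^ (-(1+b)) ≤ C * (m+1) ^ (-b) := by
  have hab' : 0 < a - b := sub_pos.2 hab
  have ha : 0 < a := hb.trans hab
  have h2a : 0 ≤ 2*a/(a-b) := by positivity
  have hm0 : 0 < m := by linarith
  have hn0 : 0 < m + 1 := by linarith
  have hmb : b < m := by linarith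
  have hma : a ≤ m + 1 := by linarith
  have hC0 : 0 < C := lt_of_lt_of_le (by positivity) hC
  have hmgeb : 2*a ≤ (a-b)*m := by
    have := (div_le_iff₀ hab').mp (by linarith : 2*a/(a-b) ≤ m)
    linarith [this]
  -- key1 : (m/(m+1))^b ≥ (m-b)/m
  have hx : (0:ℝ) < m/(m+1) := by positivity
  have hlog : -(1/m) ≤ Real.log (m/(m+1)) := by
    have h1 : Real.log ((m+1)/m) ≤ (m+1)/m - 1 :=
      Real.log_le_sub_one_of_pos (by positivity)
    have h2 : Real.log (m/(m+1)) = - Real.log ((m+1)/m) := by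
      rw [← Real.log_inv]
      congr 1
      field_simp
    have h3 : (m+1)/m - 1 = 1/m := by field_simp; ring
    rw [h2]
    linarith [h1, h3.le]
  have key1 : (m - b)/m ≤ (m/(m+1)) ^ b := by
    rw [Real.rpow_def_of_pos hx]
    have h4 : 1 + Real.log (m/(m+1)) * b ≤ Real.exp (Real.log (m/(m+1)) * b) :=
      Real.add_one_le_exp _ |>.trans_eq' (by ring)
    have h5 : -(1/m) * b ≤ Real.log (m/(m+1)) * b :=
      mul_le_mul_of_nonneg_right hlog hb.le
    have h6 : (m - b)/m = 1 + (-(1/m)) * b := by field_simp; ring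
    linarith
  -- key2 : m^(-b) ≤ (m+1)^(-b) * (m/(m-b))
  have key2 : m ^ (-b) ≤ (m+1) ^ (-b) * (m/(m-b)) := by
    have hxb : (m/(m+1)) ^ (-b) ≤ m/(m-b) := by
      rw [Real.rpow_neg hx.le]
      have hpos : (0:ℝ) < (m-b)/m := by
        have : 0 < m - b := by linarith
        positivity
      have := inv_anti₀ hpos key1
      rwa [inv_div] at this
    have hsplit : m ^ (-b) = (m+1) ^ (-b) * (m/(m+1)) ^ (-b) := by
      rw [← Real.mul_rpow (by positivity) hx.le]
      congr 1
      field_simp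
    rw [hsplit]
    exact mul_le_mul_of_nonneg_left hxb (Real.rpow_nonneg hn0.le _)
  have hcoef : (0:ℝ) ≤ 1 - a/(m+1) := by
    rw [sub_nonneg, div_le_one hn0]
    exact hma
  -- numerator inequality
  have hnum : m - b ≤ C * ((a-b)*m - b) := by
    have h7 : (a-b)*m/2 ≤ (a-b)*m - b := by linarith
    have h8 : (0:ℝ) ≤ (a-b)*m/2 := by positivity
    have h9 : (2/(a-b)) * ((a-b)*m/2) ≤ C * ((a-b)*m - b) :=
      mul_le_mul hC h7 h8 hC0.le
    have h10 : (2/(a-b)) * ((a-b)*m/2) = m := by field_simp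
    linarith
  -- key3 : coefficient inequality
  have hmb' : (0:ℝ) < m - b := by linarith
  have key3 : C*(1 - a/(m+1))*(m/(m-b)) + 1/(m+1) ≤ C := by
    rw [← sub_nonneg]
    have e : C - (C*(1 - a/(m+1))*(m/(m-b)) + 1/(m+1))
        = (C*((a-b)*m - b) - (m-b)) / ((m+1)*(m-b)) := by
      field_simp
      ring
    rw [e]
    apply div_nonneg (by linarith) (by positivity)
  -- combine
  have hsplit2 : (m+1) ^ (-(1+b)) = (m+1) ^ (-b) * (1/(m+1)) := by
    rw [show -(1+b) = -b + (-1) by ring, Real.rpow_add hn0, Real.rpow_neg_one]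
    ring
  calc C * (1 - a/(m+1)) * m ^ (-b) + (m+1) ^ (-(1+b))
      ≤ C * (1 - a/(m+1)) * ((m+1) ^ (-b) * (m/(m-b))) + (m+1) ^ (-b) * (1/(m+1)) := by
        rw [hsplit2]
        have := mul_le_mul_of_nonneg_left key2 (by positivity : (0:ℝ) ≤ C * (1 - a/(m+1)))
        linarith
    _ = (C*(1 - a/(m+1))*(m/(m-b)) + 1/(m+1)) * (m+1) ^ (-b) := by ring
    _ ≤ C * (m+1) ^ (-b) :=
        mul_le_mul_of_nonneg_right key3 (Real.rpow_nonneg hn0.le _)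

/-- The case `a > b` of the paper's Lemma 5.6 (Zhang–Wang–Zhao): for `a > b > 0`, the sums
`T_k = ∑_{l=1}^{k} (∏_{i=l+1}^{k} (1 - a/i)) l^{-(1+b)}` satisfy `T_k = O(k^{-b})`. -/
theorem stmt11 (a b : ℝ) (hb : 0 < b) (hab : b < a)
    (T : ℕ → ℝ)
    (hT : ∀ k, T k = ∑ l ∈ Finset.Icc 1 k,
      (∏ i ∈ Finset.Icc (l + 1) k, (1 - a / (i : ℝ))) * (l : ℝ) ^ (-(1 + b))) :
    ∃ C : ℝ, 0 < C ∧ ∃ K : ℕ, ∀ k : ℕ, K ≤ k → |T k| ≤ C * (k : ℝ) ^ (-b) := by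
  have hab' : 0 < a - b := sub_pos.2 hab
  have ha : 0 < a := hb.trans hab
  -- recursion
  have hrec : ∀ m : ℕ, T (m+1) = (1 - a/((m:ℝ)+1)) * T m + ((m:ℝ)+1) ^ (-(1+b)) := by
    intro m
    rw [hT (m+1), hT m]
    rw [Finset.sum_Icc_succ_top (by omega : 1 ≤ m+1)]
    have h1 : (∏ i ∈ Finset.Icc (m+1+1) (m+1), (1 - a/(i:ℝ))) = 1 := by
      rw [Finset.Icc_eq_empty (by omega), Finset.prod_empty]
    rw [h1, one_mul, Finset.mul_sum]
    have h2 : ∀ l ∈ Finset.Icc 1 m,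
        (∏ i ∈ Finset.Icc (l+1) (m+1), (1 - a/(i:ℝ))) * (l:ℝ) ^ (-(1+b))
        = (1 - a/((m:ℝ)+1)) * ((∏ i ∈ Finset.Icc (l+1) m, (1 - a/(i:ℝ))) * (l:ℝ) ^ (-(1+b))) := by
      intro l hl
      have hl' : l + 1 ≤ m + 1 := by
        have := (Finset.mem_Icc.1 hl).2; omega
      rw [Finset.prod_Icc_succ_top hl']
      push_cast
      ring
    rw [Finset.sum_congr rfl h2]
    push_cast
    ring
  set R : ℝ := 2*a/(a-b) + a + b + 2 with hRdef
  obtain ⟨K, hK⟩ : ∃ K : ℕ, R ≤ K := exists_nat_ge R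
  have h2a : 0 ≤ 2*a/(a-b) := by positivity
  have hK0 : (0:ℝ) < K := by
    have : (0:ℝ) < R := by rw [hRdef]; linarith
    linarith
  set C : ℝ := max (2/(a-b)) (|T K| * (K:ℝ)^b) with hCdef
  have hC2 : 2/(a-b) ≤ C := le_max_left _ _
  have hC0 : 0 < C := lt_of_lt_of_le (by positivity) hC2
  refine ⟨C, hC0, K, ?_⟩
  intro k hk
  induction k, hk using Nat.le_induction with
  | base =>
    have h1 : |T K| * (K:ℝ)^b ≤ C := le_max_right _ _
    rw [Real.rpow_neg hK0.le, ← div_eq_mul_inv, le_div_iff₀ (Real.rpow_pos_of_pos hK0 b)]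
    exact h1
  | succ k hk ih =>
    have hkR : R ≤ (k:ℝ) := hK.trans (Nat.cast_le.2 hk)
    have hk0 : (0:ℝ) < k := by rw [hRdef] at hkR; linarith
    have hcoef : (0:ℝ) ≤ 1 - a/((k:ℝ)+1) := by
      rw [sub_nonneg, div_le_one (by linarith)]
      rw [hRdef] at hkR; linarith
    have habs : |T (k+1)| ≤ (1 - a/((k:ℝ)+1)) * |T k| + ((k:ℝ)+1) ^ (-(1+b)) := by
      rw [hrec k]
      refine (abs_add_le _ _).trans ?_
      rw [abs_mul, abs_of_nonneg hcoef,
        abs_of_nonneg (Real.rpow_nonneg (by linarith) _)]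
    have step1 : (1 - a/((k:ℝ)+1)) * |T k| ≤ (1 - a/((k:ℝ)+1)) * (C * (k:ℝ) ^ (-b)) :=
      mul_le_mul_of_nonneg_left ih hcoef
    have key := stmt11_key a b C hb hab hC2 (k:ℝ) (by rw [hRdef] at hkR; linarith)
    have hcast : ((k+1 : ℕ) : ℝ) = (k:ℝ) + 1 := by push_cast; ring
    rw [hcast]
    calc |T (k+1)| ≤ (1 - a/((k:ℝ)+1)) * (C * (k:ℝ) ^ (-b)) + ((k:ℝ)+1) ^ (-(1+b)) := by
          linarith
      _ = C * (1 - a/((k:ℝ)+1)) * (k:ℝ) ^ (-b) + ((k:ℝ)+1) ^ (-(1+b)) := by ring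
      _ ≤ C * ((k:ℝ)+1) ^ (-b) := key
end

section
/- Let g, π, δ, c, β, f, φ, N, λ, σ, γ be positive real numbers, and define w₁ = 2γgπδ²/c − β(f²φ⁴σ/c + 2N + σλ²/c), w₂ = −2βcN/σ, and w₃ = 3βσ/(2c). If γ > (β/(2gπδ²))·( 2cN + σ(f²φ⁴ + λ²) + 8c⁴N²/(3σ³) ), then w₁ > 0, w₁w₃ > w₂², and consequently the smallest eigenvalue of the symmetric 2×2 matrix W = [[w₁, w₂],[w₂, w₃]], namely λ_min(W) = ( (w₁ + w₃) − √((w₁ − w₃)² + 4w₂²) ) / 2, is strictly positive. -/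
/-- The algebraic core of the proof of the paper's Theorem 1: the step-coefficient condition
on `γ` guarantees `w₁ > 0`, `w₁ w₃ > w₂²`, and hence positivity of the smallest eigenvalue
`((w₁ + w₃) - √((w₁ - w₃)² + 4 w₂²))/2` of the symmetric matrix `W = [[w₁, w₂], [w₂, w₃]]`. -/
theorem stmt12 (g π δ c β f φ N lam σ γ : ℝ)
    (hg : 0 < g) (hπ : 0 < π) (hδ : 0 < δ) (hc : 0 < c) (hβ : 0 < β) (hf : 0 < f)
    (hφ : 0 < φ) (hN : 0 < N) (hlam : 0 < lam) (hσ : 0 < σ) (hγpos : 0 < γ)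
    (w₁ w₂ w₃ : ℝ)
    (hw₁ : w₁ = 2 * γ * g * π * δ ^ 2 / c - β * (f ^ 2 * φ ^ 4 * σ / c + 2 * N + σ * lam ^ 2 / c))
    (hw₂ : w₂ = -(2 * β * c * N / σ))
    (hw₃ : w₃ = 3 * β * σ / (2 * c))
    (hγ : γ > β / (2 * g * π * δ ^ 2) *
      (2 * c * N + σ * (f ^ 2 * φ ^ 4 + lam ^ 2) + 8 * c ^ 4 * N ^ 2 / (3 * σ ^ 3))) :
    0 < w₁ ∧ w₂ ^ 2 < w₁ * w₃ ∧
      0 < ((w₁ + w₃) - Real.sqrt ((w₁ - w₃) ^ 2 + 4 * w₂ ^ 2)) / 2 := by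
  have hA : 0 < 2 * g * π * δ ^ 2 := by positivity
  rw [gt_iff_lt, div_mul_eq_mul_div, div_lt_iff₀ hA] at hγ
  have hc' : c ≠ 0 := hc.ne'
  have hσ' : σ ≠ 0 := hσ.ne'
  have key : 8 * β * c ^ 3 * N ^ 2 / (3 * σ ^ 3) < w₁ := by
    rw [hw₁, div_sub' hc', div_lt_div_iff₀ (by positivity) hc]
    have hσ3 : 0 < σ ^ 3 := by positivity
    field_simp at hγ ⊢
    nlinarith [mul_pos (mul_pos hβ hN) hc, sq_nonneg σ, mul_pos hσ3 hc]
  have hw₃pos : 0 < w₃ := by rw [hw₃]; positivity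
  have h1 : 0 < w₁ := lt_trans (by positivity) key
  have h2 : w₂ ^ 2 < w₁ * w₃ := by
    have := mul_lt_mul_of_pos_right key hw₃pos
    have heq : 8 * β * c ^ 3 * N ^ 2 / (3 * σ ^ 3) * w₃ = w₂ ^ 2 := by
      rw [hw₂, hw₃]; field_simp; ring
    linarith [heq ▸ this]
  refine ⟨h1, h2, ?_⟩
  have hsum : 0 < w₁ + w₃ := by linarith
  have hlt : (w₁ - w₃) ^ 2 + 4 * w₂ ^ 2 < (w₁ + w₃) ^ 2 := by nlinarith
  have := (Real.sqrt_lt' hsum).mpr hlt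
  linarith
end

section
/- Let g, π, δ, c, β, f, φ, N, λ, σ, γ be positive real numbers with β > 2c/(3σ), and define w₁ = 2γgπδ²/c − β(f²φ⁴σ/c + 2N + σλ²/c), w₂ = −2βcN/σ, and w₃ = 3βσ/(2c). If γ > (β/(2gπδ²))·( 2cN + σ(f²φ⁴ + λ²) + 8βc⁴N²/(σ²(3βσ − 2c)) + c/β ), then w₃ > 1, (w₁ − 1)(w₃ − 1) > w₂², and consequently λ_min(W) = ( (w₁ + w₃) − √((w₁ − w₃)² + 4w₂²) ) / 2 > 1, where W = [[w₁, w₂],[w₂, w₃]]. -/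
private lemma stmt13_aux (a b s2 : ℝ) (h : s2 < (a - 1) * (b - 1)) :
    (a - b) ^ 2 + 4 * s2 < (a + b - 2) ^ 2 := by nlinarith

/-- The algebraic core of the proof of the paper's Theorem 2 (case `b_k = 1/k`): with
`β > 2c/(3σ)`, the stated condition on `γ` forces `w₃ > 1`, `(w₁ - 1)(w₃ - 1) > w₂²`, and
hence the smallest eigenvalue `((w₁ + w₃) - √((w₁ - w₃)² + 4 w₂²))/2` of
`W = [[w₁, w₂], [w₂, w₃]]` exceeds `1`. -/
theorem stmt13 (g π δ c β f φ N lam σ γ : ℝ)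
    (hg : 0 < g) (hπ : 0 < π) (hδ : 0 < δ) (hc : 0 < c) (hβ : 0 < β) (hf : 0 < f)
    (hφ : 0 < φ) (hN : 0 < N) (hlam : 0 < lam) (hσ : 0 < σ) (hγpos : 0 < γ)
    (hβσ : β > 2 * c / (3 * σ))
    (w₁ w₂ w₃ : ℝ)
    (hw₁ : w₁ = 2 * γ * g * π * δ ^ 2 / c - β * (f ^ 2 * φ ^ 4 * σ / c + 2 * N + σ * lam ^ 2 / c))
    (hw₂ : w₂ = -(2 * β * c * N / σ))
    (hw₃ : w₃ = 3 * β * σ / (2 * c))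
    (hγ : γ > β / (2 * g * π * δ ^ 2) *
      (2 * c * N + σ * (f ^ 2 * φ ^ 4 + lam ^ 2) +
        8 * β * c ^ 4 * N ^ 2 / (σ ^ 2 * (3 * β * σ - 2 * c)) + c / β)) :
    1 < w₃ ∧ w₂ ^ 2 < (w₁ - 1) * (w₃ - 1) ∧
      1 < ((w₁ + w₃) - Real.sqrt ((w₁ - w₃) ^ 2 + 4 * w₂ ^ 2)) / 2 := by
  have hA : 0 < 3 * β * σ - 2 * c := by
    have h := (div_lt_iff₀ (by positivity : (0:ℝ) < 3 * σ)).mp hβσ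
    nlinarith
  have h3 : 1 < w₃ := by
    rw [hw₃, lt_div_iff₀ (by positivity : (0:ℝ) < 2 * c)]
    nlinarith
  set X : ℝ := 2 * c * N + σ * (f ^ 2 * φ ^ 4 + lam ^ 2) +
      8 * β * c ^ 4 * N ^ 2 / (σ ^ 2 * (3 * β * σ - 2 * c)) + c / β with hX
  set M : ℝ := 8 * β ^ 2 * c ^ 3 * N ^ 2 / (σ ^ 2 * (3 * β * σ - 2 * c)) with hM
  have hMpos : 0 < M := by
    apply div_pos (by positivity)
    exact mul_pos (by positivity) hA
  have hP : (0:ℝ) < 2 * g * π * δ ^ 2 := by positivity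
  have step1 : β * X < 2 * γ * g * π * δ ^ 2 := by
    have h := mul_lt_mul_of_pos_right hγ hP
    calc β * X = β / (2 * g * π * δ ^ 2) * X * (2 * g * π * δ ^ 2) := by
          field_simp
      _ < γ * (2 * g * π * δ ^ 2) := h
      _ = 2 * γ * g * π * δ ^ 2 := by ring
  have step2 : β * X / c =
      β * (f ^ 2 * φ ^ 4 * σ / c + 2 * N + σ * lam ^ 2 / c) + M + 1 := by
    rw [hX, hM]
    field_simp
    ring
  have hstep : β * X / c < 2 * γ * g * π * δ ^ 2 / c :=
    (div_lt_div_iff_of_pos_right hc).mpr step1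
  have hw1M : M < w₁ - 1 := by rw [hw₁]; linarith
  have h2 : w₂ ^ 2 < (w₁ - 1) * (w₃ - 1) := by
    have hw31 : w₃ - 1 = (3 * β * σ - 2 * c) / (2 * c) := by
      rw [hw₃]; field_simp
    have hid : M * ((3 * β * σ - 2 * c) / (2 * c)) = w₂ ^ 2 := by
      rw [hM, hw₂]
      have hA' := hA.ne'
      generalize 3 * β * σ - 2 * c = A at hA' ⊢
      field_simp
      ring
    have hApos : 0 < (3 * β * σ - 2 * c) / (2 * c) := by positivity
    calc w₂ ^ 2 = M * ((3 * β * σ - 2 * c) / (2 * c)) := hid.symm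
      _ < (w₁ - 1) * ((3 * β * σ - 2 * c) / (2 * c)) := by
          exact mul_lt_mul_of_pos_right hw1M hApos
      _ = (w₁ - 1) * (w₃ - 1) := by rw [hw31]
  refine ⟨h3, h2, ?_⟩
  have hw1 : 1 < w₁ := by linarith
  have hy : 0 < w₁ + w₃ - 2 := by linarith
  have hs : Real.sqrt ((w₁ - w₃) ^ 2 + 4 * w₂ ^ 2) < w₁ + w₃ - 2 := by
    rw [show w₁ + w₃ - 2 = Real.sqrt ((w₁ + w₃ - 2) ^ 2) from
      (Real.sqrt_sq hy.le).symm]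
    exact Real.sqrt_lt_sqrt (by positivity) (stmt13_aux w₁ w₃ (w₂ ^ 2) h2)
  linarith
end

section
/- Let h ≥ 1 be an integer, let (b_k)_{k≥1} be a sequence of positive reals with b_k → 0 and ∑_{k=1}^∞ b_k = ∞, and set s_k = b_{k−h+1} + b_{k−h+2} + ⋯ + b_k for k > h. Let w₁ > 0, w₃ > 0, and w₂ ≤ 0 satisfy w₁w₃ > w₂². Suppose (U_k)_{k≥0} and (V_k)_{k≥0} are nonnegative real sequences and there exist K ≥ h and C ≥ 0 such that for all k > K: U_k ≤ (1 − w₁ s_k) U_{k−h} + |w₂| s_k V_{k−h} + C b_k² and V_k ≤ (1 − w₃ s_k) V_{k−h} + |w₂| s_k U_{k−h} + C b_k². Then U_k → 0 and V_k → 0 as k → ∞. -/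
open Filter

lemma lemA14 (t e x : ℕ → ℝ) (hx : ∀ n, 0 ≤ x n)
    (ht0 : ∀ n, 0 ≤ t n) (ht1 : ∀ n, t n ≤ 1)
    (he : Tendsto e atTop (nhds 0))
    (hdiv : Tendsto (fun N => ∑ n ∈ Finset.range N, t n) atTop atTop)
    (hrec : ∀ n, x (n + 1) ≤ (1 - t n) * x n + t n * e n) :
    Tendsto x atTop (nhds 0) := by
  rw [Metric.tendsto_atTop]
  intro ε hε
  obtain ⟨N₀, hN₀⟩ := (Metric.tendsto_atTop.1 he) (ε / 2) (by positivity)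
  have heb : ∀ n, N₀ ≤ n → e n ≤ ε / 2 := by
    intro n hn
    have := hN₀ n hn
    rw [Real.dist_eq, sub_zero] at this
    exact le_of_lt (lt_of_abs_lt this)
  have key : ∀ n, N₀ ≤ n →
      x n - ε / 2 ≤ x N₀ * ∏ i ∈ Finset.Ico N₀ n, (1 - t i) := by
    intro n hn
    induction n, hn using Nat.le_induction with
    | base => simp [hε.le]; linarith [hε]
    | succ n hn ih =>
      have h1 : 0 ≤ 1 - t n := by linarith [ht1 n]
      have h2 : x (n + 1) - ε / 2 ≤ (1 - t n) * (x n - ε / 2) := by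
        nlinarith [hrec n, ht0 n, heb n hn,
          mul_le_mul_of_nonneg_left (heb n hn) (ht0 n)]
      calc x (n + 1) - ε / 2 ≤ (1 - t n) * (x n - ε / 2) := h2
        _ ≤ (1 - t n) * (x N₀ * ∏ i ∈ Finset.Ico N₀ n, (1 - t i)) :=
            mul_le_mul_of_nonneg_left ih h1
        _ = x N₀ * ∏ i ∈ Finset.Ico N₀ (n + 1), (1 - t i) := by
            rw [Finset.prod_Ico_succ_top hn]; ring
  have prodle : ∀ n, ∏ i ∈ Finset.Ico N₀ n, (1 - t i) ≤
      Real.exp (-(∑ i ∈ Finset.Ico N₀ n, t i)) := by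
    intro n
    calc ∏ i ∈ Finset.Ico N₀ n, (1 - t i)
        ≤ ∏ i ∈ Finset.Ico N₀ n, Real.exp (-(t i)) :=
          Finset.prod_le_prod (fun i _ => by linarith [ht1 i])
            (fun i _ => by linarith [Real.add_one_le_exp (-(t i))])
      _ = Real.exp (∑ i ∈ Finset.Ico N₀ n, -(t i)) := (Real.exp_sum _ _).symm
      _ = Real.exp (-(∑ i ∈ Finset.Ico N₀ n, t i)) := by rw [Finset.sum_neg_distrib]
  have hsumdiv : Tendsto (fun n => ∑ i ∈ Finset.Ico N₀ n, t i) atTop atTop := by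
    have h1 : Tendsto (fun n => (∑ i ∈ Finset.range n, t i) +
        -(∑ i ∈ Finset.range N₀, t i)) atTop atTop :=
      tendsto_atTop_add_const_right _ _ hdiv
    refine h1.congr' ?_
    filter_upwards [eventually_ge_atTop N₀] with n hn
    rw [Finset.sum_Ico_eq_sub _ hn]; ring
  have h3 : Tendsto (fun n => x N₀ * Real.exp (-(∑ i ∈ Finset.Ico N₀ n, t i)))
      atTop (nhds 0) := by
    have := Real.tendsto_exp_atBot.comp (tendsto_neg_atTop_atBot.comp hsumdiv)
    simpa using this.const_mul (x N₀)
  obtain ⟨N₁, hN₁⟩ := (Metric.tendsto_atTop.1 h3) (ε / 2) (by positivity)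
  refine ⟨max N₀ N₁, fun n hn => ?_⟩
  have hn0 : N₀ ≤ n := le_trans (le_max_left _ _) hn
  have hn1 : N₁ ≤ n := le_trans (le_max_right _ _) hn
  have hlast : x N₀ * Real.exp (-(∑ i ∈ Finset.Ico N₀ n, t i)) < ε / 2 := by
    have := hN₁ n hn1
    rw [Real.dist_eq, sub_zero] at this
    exact lt_of_le_of_lt (le_abs_self _) this
  have := key n hn0
  have h4 : x N₀ * ∏ i ∈ Finset.Ico N₀ n, (1 - t i) ≤
      x N₀ * Real.exp (-(∑ i ∈ Finset.Ico N₀ n, t i)) :=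
    mul_le_mul_of_nonneg_left (prodle n) (hx N₀)
  rw [Real.dist_eq, sub_zero, abs_of_nonneg (hx n)]
  linarith

lemma blocks14 (b : ℕ → ℝ) (h m : ℕ) (s : ℕ → ℝ)
    (hs : ∀ k, h < k → s k = ∑ j ∈ Finset.Icc (k - h + 1) k, b j)
    (hm : 1 ≤ h) (hm2 : h ≤ m) :
    ∀ N, ∑ n ∈ Finset.range N, s (m + (n + 1) * h) = ∑ j ∈ Finset.Ioc m (m + N * h), b j := by
  intro N
  induction N with
  | zero => simp
  | succ N ih =>
    rw [Finset.sum_range_succ, ih]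
    have hP : h ≤ (N + 1) * h := Nat.le_mul_of_pos_left h (Nat.succ_pos N)
    have hk : h < m + (N + 1) * h := by
      have : 0 < m := lt_of_lt_of_le hm hm2
      omega
    rw [hs _ hk]
    have hNh : m + (N + 1) * h = (m + N * h) + h := by ring
    have he2 : m + (N + 1) * h - h + 1 = m + N * h + 1 := by
      rw [hNh, Nat.add_sub_cancel]
    rw [he2, hNh, Finset.Icc_add_one_left_eq_Ioc]
    exact Finset.sum_Ioc_consecutive b (Nat.le_add_right m (N * h))
      (Nat.le_add_right _ h)

lemma reindex14 (b : ℕ → ℝ) (h k : ℕ) (hk : h < k) :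
    ∑ j ∈ Finset.Icc (k - h + 1) k, b j = ∑ i ∈ Finset.range h, b (k - i) := by
  refine Finset.sum_nbij' (i := fun j => k - j) (j := fun i => k - i) ?_ ?_ ?_ ?_ ?_
  all_goals intro a ha
  · simp only [Finset.mem_Icc] at ha; simp only [Finset.mem_range]; omega
  · simp only [Finset.mem_range] at ha; simp only [Finset.mem_Icc]; omega
  · simp only [Finset.mem_Icc] at ha; show k - (k - a) = a; omega
  · simp only [Finset.mem_range] at ha; show k - (k - a) = a; omega
  · simp only [Finset.mem_Icc] at ha
    show b a = b (k - (k - a)); congr 1; omega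

lemma lemB14 (h : ℕ) (hh : 1 ≤ h)
    (b : ℕ → ℝ) (hbpos : ∀ k, 1 ≤ k → 0 < b k)
    (hb0 : Tendsto b atTop (nhds 0))
    (hbdiv : Tendsto (fun n => ∑ k ∈ Finset.Icc 1 n, b k) atTop atTop)
    (s : ℕ → ℝ) (hs : ∀ k, h < k → s k = ∑ j ∈ Finset.Icc (k - h + 1) k, b j)
    (γ : ℝ) (hγ : 0 < γ)
    (W : ℕ → ℝ) (hW0 : ∀ k, 0 ≤ W k)
    (K : ℕ) (hK : h ≤ K) (C' : ℝ) (hC' : 0 ≤ C')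
    (hrecW : ∀ k, K < k → W k ≤ (1 - γ * s k) * W (k - h) + C' * b k ^ 2) :
    Tendsto W atTop (nhds 0) := by
  have hspos : ∀ k, h < k → 0 < s k := by
    intro k hk
    rw [hs k hk]
    refine Finset.sum_pos (fun j hj => hbpos j ?_) ⟨k, Finset.mem_Icc.2 (by omega)⟩
    rw [Finset.mem_Icc] at hj; omega
  have hsb : ∀ k, h < k → b k ≤ s k := by
    intro k hk
    rw [hs k hk]
    refine Finset.single_le_sum (fun j hj => (hbpos j ?_).le) (Finset.mem_Icc.2 (by omega))
    rw [Finset.mem_Icc] at hj; omega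
  -- s tends to 0
  have hsz : Tendsto s atTop (nhds 0) := by
    have hg : Tendsto (fun k => ∑ i ∈ Finset.range h, b (k - i)) atTop (nhds 0) := by
      have := tendsto_finset_sum (Finset.range h)
        (fun i _ => hb0.comp (tendsto_sub_atTop_nat i))
      simpa using this
    refine hg.congr' ?_
    filter_upwards [eventually_gt_atTop h] with k hk
    rw [hs k hk, reindex14 b h k hk]
  have hts : Tendsto (fun k => γ * s k) atTop (nhds 0) := by
    simpa using hsz.const_mul γ
  obtain ⟨K₁, hK₁⟩ := Metric.tendsto_atTop.1 hts 1 one_pos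
  have ht1 : ∀ k, K₁ ≤ k → γ * s k ≤ 1 := by
    intro k hk
    have := hK₁ k hk
    rw [Real.dist_eq, sub_zero] at this
    exact le_of_lt (lt_of_abs_lt this)
  set K' := max K K₁ with hK'def
  have hKK' : K ≤ K' := le_max_left _ _
  have hK₁K' : K₁ ≤ K' := le_max_right _ _
  have hhK' : h ≤ K' := le_trans hK hKK'
  -- error sequence
  set e : ℕ → ℝ := fun k => if h < k then C' * b k ^ 2 / (γ * s k) else 0 with he_def
  have hee : ∀ k, h < k → γ * s k * e k = C' * b k ^ 2 := by
    intro k hk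
    simp only [he_def, if_pos hk]
    rw [mul_div_cancel₀]
    exact ne_of_gt (mul_pos hγ (hspos k hk))
  have heto : Tendsto e atTop (nhds 0) := by
    have hup : Tendsto (fun k => (C' / γ) * |b k|) atTop (nhds 0) := by
      have := (hb0.abs).const_mul (C' / γ)
      simpa using this
    refine squeeze_zero (fun k => ?_) (fun k => ?_) hup
    · simp only [he_def]
      split
      · next hk =>
        exact div_nonneg (mul_nonneg hC' (sq_nonneg _)) (mul_pos hγ (hspos k hk)).le
      · exact le_rfl
    · simp only [he_def]
      split
      · next hk =>
        have hbk := hbpos k (by omega)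
        have h1 : C' * b k ^ 2 / (γ * s k) = (C' / γ) * (b k ^ 2 / s k) :=
          mul_div_mul_comm C' (b k ^ 2) γ (s k)
        rw [h1]
        refine mul_le_mul_of_nonneg_left ?_ (div_nonneg hC' hγ.le)
        have h2 : b k ^ 2 / s k ≤ b k ^ 2 / b k :=
          div_le_div_of_nonneg_left (sq_nonneg _) hbk (hsb k hk)
        have h3 : b k ^ 2 / b k = b k := by
          rw [pow_two, mul_div_assoc, div_self (ne_of_gt hbk), mul_one]
        rw [abs_of_pos hbk]
        linarith
      · positivity
  -- divergent partial sums as Ioc sums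
  have hbdiv' : Tendsto (fun n => ∑ k ∈ Finset.Ioc 0 n, b k) atTop atTop := by
    refine hbdiv.congr (fun n => ?_)
    rw [← Finset.Icc_add_one_left_eq_Ioc 0 n, zero_add]
  -- per-chain convergence
  have chain : ∀ m, K' < m → Tendsto (fun n => W (m + n * h)) atTop (nhds 0) := by
    intro m hm1
    have hmh : h < m := lt_of_le_of_lt hhK' hm1
    have hφh : ∀ n : ℕ, h < m + (n + 1) * h := fun n =>
      lt_of_lt_of_le hmh (Nat.le_add_right m _)
    have hφK : ∀ n : ℕ, K < m + (n + 1) * h := fun n =>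
      lt_of_le_of_lt hKK' (lt_of_lt_of_le hm1 (Nat.le_add_right m _))
    have hφK₁ : ∀ n : ℕ, K₁ ≤ m + (n + 1) * h := fun n =>
      le_trans hK₁K' (le_trans hm1.le (Nat.le_add_right m _))
    have hφmono : ∀ n : ℕ, n ≤ m + (n + 1) * h := by
      intro n
      have h1 : n + 1 ≤ (n + 1) * h := Nat.le_mul_of_pos_right (n + 1) (by omega)
      calc n ≤ n + 1 := Nat.le_succ n
        _ ≤ (n + 1) * h := h1
        _ ≤ m + (n + 1) * h := Nat.le_add_left _ m
    have hφat : Tendsto (fun n => m + (n + 1) * h) atTop atTop :=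
      tendsto_atTop_mono hφmono tendsto_id
    refine lemA14 (fun n => γ * s (m + (n + 1) * h)) (fun n => e (m + (n + 1) * h))
      (fun n => W (m + n * h)) (fun n => hW0 _)
      (fun n => mul_nonneg hγ.le (hspos _ (hφh n)).le)
      (fun n => ht1 _ (hφK₁ n)) (heto.comp hφat) ?_ ?_
    · -- divergence of the chain sums
      have hψ : Tendsto (fun N => m + N * h) atTop atTop := by
        refine tendsto_atTop_mono (fun N => ?_) tendsto_id
        calc N ≤ N * h := Nat.le_mul_of_pos_right N (by omega)
          _ ≤ m + N * h := Nat.le_add_left _ m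
      have h1 : Tendsto (fun N => (∑ k ∈ Finset.Ioc 0 (m + N * h), b k) +
          -(∑ k ∈ Finset.Ioc 0 m, b k)) atTop atTop :=
        tendsto_atTop_add_const_right _ _ (hbdiv'.comp hψ)
      have h2 : Tendsto (fun N => γ * ((∑ k ∈ Finset.Ioc 0 (m + N * h), b k) +
          -(∑ k ∈ Finset.Ioc 0 m, b k))) atTop atTop :=
        Tendsto.const_mul_atTop hγ h1
      refine h2.congr (fun N => ?_)
      have h3 : (∑ k ∈ Finset.Ioc 0 m, b k) + ∑ k ∈ Finset.Ioc m (m + N * h), b k =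
          ∑ k ∈ Finset.Ioc 0 (m + N * h), b k :=
        Finset.sum_Ioc_consecutive b (Nat.zero_le m) (Nat.le_add_right _ _)
      have h4 : ∑ n ∈ Finset.range N, γ * s (m + (n + 1) * h) =
          γ * ∑ n ∈ Finset.range N, s (m + (n + 1) * h) := (Finset.mul_sum _ _ _).symm
      show γ * ((∑ k ∈ Finset.Ioc 0 (m + N * h), b k) +
          -(∑ k ∈ Finset.Ioc 0 m, b k)) = ∑ n ∈ Finset.range N, γ * s (m + (n + 1) * h)
      rw [h4, blocks14 b h m s hs hh hmh.le N, ← h3]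
      ring
    · -- the recurrence along the chain
      intro n
      have hrec := hrecW _ (hφK n)
      have hsub : m + (n + 1) * h - h = m + n * h := by
        rw [show m + (n + 1) * h = (m + n * h) + h from by ring, Nat.add_sub_cancel]
      rw [hsub] at hrec
      rw [← hee _ (hφh n)] at hrec
      exact hrec
  -- combine chains
  rw [Metric.tendsto_atTop]
  intro ε hε
  have H : ∀ m, ∃ N, ∀ n, N ≤ n → K' < m → W (m + n * h) < ε := by
    intro m
    by_cases hm : K' < m
    · obtain ⟨N, hN⟩ := Metric.tendsto_atTop.1 (chain m hm) ε hε
      refine ⟨N, fun n hn _ => ?_⟩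
      have := hN n hn
      rw [Real.dist_eq, sub_zero] at this
      exact lt_of_le_of_lt (le_abs_self _) this
    · exact ⟨0, fun n _ hm' => absurd hm' hm⟩
  choose f hf using H
  set N := Finset.sup (Finset.Ioc K' (K' + h)) f with hNdef
  refine ⟨K' + 1 + (N + 1) * h, fun k hk => ?_⟩
  set q := (k - (K' + 1)) / h with hq
  set r := (k - (K' + 1)) % h with hr'
  have hr : r < h := Nat.mod_lt _ (by omega)
  have hdm : h * q + r = k - (K' + 1) := Nat.div_add_mod _ _
  have hk1 : K' + 1 ≤ k := le_trans (Nat.le_add_right _ _) hk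
  have hkeq : k = (K' + 1 + r) + q * h := by
    have h1 : k = (K' + 1) + (k - (K' + 1)) := (Nat.add_sub_cancel' hk1).symm
    rw [h1, ← hdm]; ring
  have hge : (N + 1) * h ≤ k - (K' + 1) := Nat.le_sub_of_add_le (by
    rw [add_comm] at hk; exact hk)
  have hNq : N < q := by
    have h2 : h * N + h ≤ h * q + r := by
      calc h * N + h = (N + 1) * h := by ring
        _ ≤ k - (K' + 1) := hge
        _ = h * q + r := hdm.symm
    have h4 : h * N + h < h * q + h := lt_of_le_of_lt h2 (Nat.add_lt_add_left hr (h * q))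
    have h3 : h * N < h * q := Nat.lt_of_add_lt_add_right h4
    exact lt_of_mul_lt_mul_left h3 (Nat.zero_le h)
  have hmem : K' + 1 + r ∈ Finset.Ioc K' (K' + h) := Finset.mem_Ioc.2 (by omega)
  have hfm : f (K' + 1 + r) ≤ N := Finset.le_sup hmem
  have hfin := hf (K' + 1 + r) q (le_trans hfm hNq.le) (by omega)
  rw [Real.dist_eq, sub_zero, abs_of_nonneg (hW0 k), hkeq]
  exact hfin

/-- The coupled-recursion convergence argument at the heart of the paper's Theorem 1:
two nonnegative sequences `U`, `V` satisfying the coupled step-size-weighted contraction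
inequalities with a positive definite coupling matrix `[[w₁, w₂], [w₂, w₃]]` both tend
to zero. -/
theorem stmt14 (h : ℕ) (hh : 1 ≤ h)
    (b : ℕ → ℝ) (hbpos : ∀ k, 1 ≤ k → 0 < b k)
    (hb0 : Tendsto b atTop (nhds 0))
    (hbdiv : Tendsto (fun n => ∑ k ∈ Finset.Icc 1 n, b k) atTop atTop)
    (s : ℕ → ℝ) (hs : ∀ k, h < k → s k = ∑ j ∈ Finset.Icc (k - h + 1) k, b j)
    (w₁ w₂ w₃ : ℝ) (hw₁ : 0 < w₁) (hw₃ : 0 < w₃) (hw₂ : w₂ ≤ 0)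
    (hdet : w₂ ^ 2 < w₁ * w₃)
    (U V : ℕ → ℝ) (hU : ∀ k, 0 ≤ U k) (hV : ∀ k, 0 ≤ V k)
    (K : ℕ) (hK : h ≤ K) (C : ℝ) (hC : 0 ≤ C)
    (hrecU : ∀ k, K < k →
      U k ≤ (1 - w₁ * s k) * U (k - h) + |w₂| * s k * V (k - h) + C * (b k) ^ 2)
    (hrecV : ∀ k, K < k →
      V k ≤ (1 - w₃ * s k) * V (k - h) + |w₂| * s k * U (k - h) + C * (b k) ^ 2) :
    Tendsto U atTop (nhds 0) ∧ Tendsto V atTop (nhds 0) := by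
  set a := -w₂ with ha_def
  have ha0 : 0 ≤ a := by rw [ha_def]; linarith
  have ha2 : a ^ 2 < w₁ * w₃ := by rw [ha_def]; nlinarith [hdet]
  have habs : |w₂| = a := by rw [abs_of_nonpos hw₂]
  set l := Real.sqrt (w₁ / w₃) with hl_def
  have hl : 0 < l := Real.sqrt_pos.2 (div_pos hw₁ hw₃)
  have hl2 : l ^ 2 * w₃ = w₁ := by
    rw [hl_def, Real.sq_sqrt (div_pos hw₁ hw₃).le]
    field_simp
  have h1 : l * a < w₁ := by
    refine lt_of_pow_lt_pow_left₀ 2 hw₁.le ?_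
    nlinarith [ha2, hl, mul_pos hl hl]
  have h2 : a < l * w₃ := by
    refine lt_of_pow_lt_pow_left₀ 2 (by positivity) ?_
    nlinarith [ha2, hl]
  set γ := min (w₁ - l * a) ((l * w₃ - a) / l) with hγ_def
  have hγ : 0 < γ := lt_min (by linarith) (div_pos (by linarith) hl)
  have fact1 : γ + l * a ≤ w₁ := by
    have h3 : γ ≤ w₁ - l * a := by rw [hγ_def]; exact min_le_left _ _
    linarith
  have fact2 : l * γ + a ≤ l * w₃ := by
    have h3 : γ ≤ (l * w₃ - a) / l := by rw [hγ_def]; exact min_le_right _ _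
    have h4 : γ * l ≤ l * w₃ - a := (le_div_iff₀ hl).1 h3
    nlinarith [h4]
  -- the combined sequence
  have hW0 : ∀ k, 0 ≤ U k + l * V k := fun k =>
    add_nonneg (hU k) (mul_nonneg hl.le (hV k))
  have hrecW : ∀ k, K < k → U k + l * V k ≤
      (1 - γ * s k) * (U (k - h) + l * V (k - h)) + ((1 + l) * C) * b k ^ 2 := by
    intro k hk
    have hs0 : 0 ≤ s k := by
      rw [hs k (lt_of_le_of_lt hK hk)]
      refine Finset.sum_nonneg (fun j hj => ?_)
      rw [Finset.mem_Icc] at hj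
      exact (hbpos j (by omega)).le
    have hU' := hrecU k hk
    have hV' := hrecV k hk
    rw [habs] at hU' hV'
    have hV'' := mul_le_mul_of_nonneg_left hV' hl.le
    have key1 : 0 ≤ s k * U (k - h) * (w₁ - l * a - γ) :=
      mul_nonneg (mul_nonneg hs0 (hU _)) (by linarith)
    have key2 : 0 ≤ s k * V (k - h) * (l * w₃ - a - l * γ) :=
      mul_nonneg (mul_nonneg hs0 (hV _)) (by linarith)
    nlinarith [hU', hV'', key1, key2]
  have htW : Tendsto (fun k => U k + l * V k) atTop (nhds 0) :=
    lemB14 h hh b hbpos hb0 hbdiv s hs γ hγ (fun k => U k + l * V k) hW0 K hK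
      ((1 + l) * C) (by positivity) hrecW
  constructor
  · refine squeeze_zero hU (fun k => ?_) htW
    exact le_add_of_nonneg_right (mul_nonneg hl.le (hV k))
  · have h5 : Tendsto (fun k => l⁻¹ * (U k + l * V k)) atTop (nhds 0) := by
      simpa using htW.const_mul l⁻¹
    refine squeeze_zero hV (fun k => ?_) h5
    have h6 : l⁻¹ * (U k + l * V k) = l⁻¹ * U k + V k := by
      rw [mul_add, ← mul_assoc, inv_mul_cancel₀ hl.ne', one_mul]
    rw [h6]
    have := mul_nonneg (inv_nonneg.2 hl.le) (hU k)
    linarith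
end

section
/- Let h ≥ 1 be an integer, p ∈ (1/2, 1), a > 0, C ≥ 0, and K ≥ h. Let (z_k)_{k≥0} be a sequence of nonnegative reals satisfying z_k ≤ (1 − a/k^p) z_{k−h} + C/k^{2p} for all k > K. Then z_k = O(1/k^p); that is, there exists M > 0 such that z_k ≤ M/k^p for all k ≥ 1. -/
/-- Arithmetic core of the induction step for `stmt15`. -/
lemma stmt15_aux (a C M h X p : ℝ) (ha : 0 < a) (hC : 0 ≤ C) (hM0 : 0 < M)
    (hh1 : 1 ≤ h) (hX2h : 2 * h < X) (hp0 : 0 ≤ p) (hp2 : p < 1)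
    (hf' : 4 * h / a ≤ X ^ (1 - p)) (hg : 2 * C ≤ a * M) (hCM : C ≤ M)
    (zk zkh : ℝ) (hzkh : 0 ≤ zkh)
    (hrk : zk ≤ (1 - a / X ^ p) * zkh + C / X ^ (2 * p))
    (hIH : zkh ≤ M / (X - h) ^ p) : zk ≤ M / X ^ p := by
  have hX1 : (1:ℝ) ≤ X := by linarith
  have hX0 : (0:ℝ) < X := by linarith
  have hY0 : (0:ℝ) < X - h := by linarith
  have hYX : X - h ≤ X := by linarith
  have hs0 : (0:ℝ) < X ^ p := Real.rpow_pos_of_pos hX0 p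
  have hsY0 : (0:ℝ) < (X - h) ^ p := Real.rpow_pos_of_pos hY0 p
  have hs1 : (1:ℝ) ≤ X ^ p := Real.one_le_rpow hX1 hp0
  have h2p : X ^ (2 * p) = X ^ p * X ^ p := by
    rw [two_mul, Real.rpow_add hX0]
  rw [h2p] at hrk
  -- abbreviations
  obtain ⟨s, hsdef⟩ : ∃ s : ℝ, s = X ^ p := ⟨_, rfl⟩
  obtain ⟨sY, hsYdef⟩ : ∃ sY : ℝ, sY = (X - h) ^ p := ⟨_, rfl⟩
  rw [← hsdef] at hrk hs0 hs1 ⊢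
  rw [← hsYdef] at hsY0 hIH
  -- fact m : sY ≤ s
  have hm : sY ≤ s := by
    rw [hsdef, hsYdef]; exact Real.rpow_le_rpow hY0.le hYX hp0
  -- fact f : 4*h*s ≤ a*X
  have hf : 4 * h * s ≤ a * X := by
    have h2 : 4 * h ≤ a * X ^ (1 - p) := by
      rw [div_le_iff₀ ha] at hf'; linarith
    have h3 : X ^ (1 - p) * s = X := by
      rw [hsdef, ← Real.rpow_add hX0]; norm_num
    calc 4 * h * s ≤ a * X ^ (1 - p) * s :=
          mul_le_mul_of_nonneg_right h2 (by linarith)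
      _ = a * X := by rw [mul_assoc, h3]
  -- fact e : s*X ≤ sY*X + 2*h*sY
  have hratio : s * (X - h) ≤ X * sY := by
    have h1 : s / sY ≤ X / (X - h) := by
      rw [hsdef, hsYdef, ← Real.div_rpow hX0.le hY0.le]
      calc (X / (X - h)) ^ p ≤ (X / (X - h)) ^ (1:ℝ) :=
            Real.rpow_le_rpow_of_exponent_le ((one_le_div hY0).mpr hYX) hp2.le
        _ = X / (X - h) := Real.rpow_one _
    rw [div_le_div_iff₀ hsY0 hY0] at h1; linarith
  have h2s : s ≤ 2 * sY := by
    have hX2Y : X ≤ 2 * (X - h) := by linarith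
    have h1 : X * sY ≤ 2 * (X - h) * sY := mul_le_mul_of_nonneg_right hX2Y hsY0.le
    exact le_of_mul_le_mul_right (by linarith : s * (X - h) ≤ 2 * sY * (X - h)) hY0
  have he : s * X ≤ sY * X + 2 * h * sY := by
    have h2 : s * h ≤ 2 * sY * h :=
      mul_le_mul_of_nonneg_right h2s (by linarith)
    nlinarith [hratio]
  by_cases hsign : 1 - a / s < 0
  · have h1 : (1 - a / s) * zkh ≤ 0 :=
      mul_nonpos_of_nonpos_of_nonneg hsign.le hzkh
    have h2 : C / (s * s) ≤ C / s :=
      div_le_div_of_nonneg_left hC hs0 (by nlinarith)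
    have h3 : C / s ≤ M / s := by
      apply (div_le_div_iff_of_pos_right hs0).mpr hCM
    linarith
  · push_neg at hsign
    have hIH2 : (1 - a / s) * zkh ≤ (1 - a / s) * (M / sY) :=
      mul_le_mul_of_nonneg_left hIH hsign
    have hA := mul_le_mul_of_nonneg_left he (mul_nonneg hM0.le hs0.le)
    have hB := mul_le_mul_of_nonneg_left hf (mul_nonneg hM0.le hsY0.le)
    have hG := mul_le_mul_of_nonneg_left hg (mul_nonneg hsY0.le hX0.le)
    have hD := mul_le_mul_of_nonneg_left hm
      (by positivity : (0:ℝ) ≤ a * M * X)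
    have hPX : ((s - a) * M * s + C * sY) * X ≤ (M * s * sY) * X := by
      linarith [hA, hB, hG, hD]
    have hP : (s - a) * M * s + C * sY ≤ M * s * sY :=
      le_of_mul_le_mul_right (by linarith) hX0
    have hkey : (1 - a / s) * (M / sY) + C / (s * s) ≤ M / s := by
      have lhs_eq : (1 - a / s) * (M / sY) + C / (s * s) =
          ((s - a) * M * s + C * sY) / (s * s * sY) := by
        field_simp
      have rhs_eq : M / s = (M * s * sY) / (s * s * sY) := by
        field_simp
      rw [lhs_eq, rhs_eq]
      exact (div_le_div_iff_of_pos_right (by positivity : (0:ℝ) < s * s * sY)).mpr hP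
    linarith

/-- The scalar rate recursion from Part I of the proof of the paper's Theorem 2: if a
nonnegative sequence satisfies `z_k ≤ (1 - a/k^p) z_{k-h} + C/k^{2p}` for all `k > K`
with `p ∈ (1/2, 1)`, then `z_k = O(1/k^p)`. -/
theorem stmt15 (h : ℕ) (hh : 1 ≤ h) (p : ℝ) (hp1 : 1 / 2 < p) (hp2 : p < 1)
    (a : ℝ) (ha : 0 < a) (C : ℝ) (hC : 0 ≤ C) (K : ℕ) (hK : h ≤ K)
    (z : ℕ → ℝ) (hz : ∀ k, 0 ≤ z k)
    (hrec : ∀ k, K < k →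
      z k ≤ (1 - a / (k : ℝ) ^ p) * z (k - h) + C / (k : ℝ) ^ (2 * p)) :
    ∃ M : ℝ, 0 < M ∧ ∀ k : ℕ, 1 ≤ k → z k ≤ M / (k : ℝ) ^ p := by
  have hp0 : (0:ℝ) ≤ p := by linarith
  have hq0 : (0:ℝ) < 1 - p := by linarith
  obtain ⟨N₁, hN₁⟩ := Filter.eventually_atTop.mp
    (((tendsto_rpow_atTop hq0).comp tendsto_natCast_atTop_atTop).eventually_ge_atTop
      (4 * h / a))
  obtain ⟨N₀, hN₀def⟩ : ∃ N₀ : ℕ, N₀ = max (max K (2 * h)) N₁ := ⟨_, rfl⟩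
  obtain ⟨M₀, hM₀def⟩ : ∃ M₀ : ℝ, M₀ = ∑ i ∈ Finset.range (N₀ + 1), z i * (i : ℝ) ^ p :=
    ⟨_, rfl⟩
  have hterm_nonneg : ∀ i ∈ Finset.range (N₀ + 1), 0 ≤ z i * (i : ℝ) ^ p :=
    fun i _ => mul_nonneg (hz i) (Real.rpow_nonneg (Nat.cast_nonneg i) p)
  have hM₀0 : 0 ≤ M₀ := hM₀def ▸ Finset.sum_nonneg hterm_nonneg
  obtain ⟨M, hMdef⟩ : ∃ M : ℝ, M = M₀ + 2 * C / a + C + 1 := ⟨_, rfl⟩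
  have hCa : (0:ℝ) ≤ 2 * C / a := by positivity
  have hM0 : 0 < M := by rw [hMdef]; linarith
  have hM₀M : M₀ ≤ M := by rw [hMdef]; linarith
  have hCM : C ≤ M := by rw [hMdef]; linarith
  have hg : 2 * C ≤ a * M := by
    have h1 : a * (2 * C / a) = 2 * C := by field_simp
    have h2 : 0 ≤ a * M₀ := mul_nonneg ha.le hM₀0
    have h3 : 0 ≤ a * C := mul_nonneg ha.le hC
    rw [hMdef]; nlinarith
  refine ⟨M, hM0, ?_⟩
  intro k
  induction k using Nat.strong_induction_on with
  | _ k ih =>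
    intro hk1
    have hX1 : (1:ℝ) ≤ (k:ℝ) := by exact_mod_cast hk1
    have hX0 : (0:ℝ) < (k:ℝ) := by linarith
    have hs0 : (0:ℝ) < (k:ℝ) ^ p := Real.rpow_pos_of_pos hX0 p
    by_cases hcase : k ≤ N₀
    · have hterm : z k * (k:ℝ) ^ p ≤ M₀ := by
        rw [hM₀def]
        exact Finset.single_le_sum hterm_nonneg (Finset.mem_range.mpr (by omega))
      rw [le_div_iff₀ hs0]
      linarith
    · push_neg at hcase
      have hkK : K < k := by
        have : K ≤ N₀ := hN₀def ▸ le_trans (le_max_left _ _) (le_max_left _ _)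
        omega
      have hk2h : 2 * h < k := by
        have : 2 * h ≤ N₀ := hN₀def ▸ le_trans (le_max_right _ _) (le_max_left _ _)
        omega
      have hkN₁ : N₁ ≤ k := by
        have : N₁ ≤ N₀ := hN₀def ▸ le_max_right _ _
        omega
      have hhk : h ≤ k := by omega
      have IH := ih (k - h) (by omega) (by omega)
      have hYc : ((k - h : ℕ) : ℝ) = (k:ℝ) - (h:ℝ) := by
        push_cast [Nat.cast_sub hhk]; ring
      have hh1 : (1:ℝ) ≤ (h:ℝ) := by exact_mod_cast hh
      have h2hX : 2 * (h:ℝ) < (k:ℝ) := by exact_mod_cast hk2h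
      have hf' : 4 * (h:ℝ) / a ≤ (k:ℝ) ^ (1 - p) := hN₁ k hkN₁
      rw [hYc] at IH
      exact stmt15_aux a C M (h:ℝ) (k:ℝ) p ha hC hM0 hh1 h2hX hp0 hp2 hf' hg hCM
        (z k) (z (k - h)) (hz _) (hrec k hkK) IH
end

section
/- Let h ≥ 1 be an integer, a > h a real number, C ≥ 0, and K ≥ h. Let (z_k)_{k≥0} be a sequence of nonnegative reals satisfying z_k ≤ (1 − a/k) z_{k−h} + C/k² for all k > K. Then z_k = O(1/k); that is, there exists M > 0 such that z_k ≤ M/k for all k ≥ 1. -/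
/-- The scalar rate recursion from Part II of the proof of the paper's Theorem 2: if a
nonnegative sequence satisfies `z_k ≤ (1 - a/k) z_{k-h} + C/k²` for all `k > K` with
`a > h`, then `z_k = O(1/k)`. -/
theorem stmt16 (h : ℕ) (hh : 1 ≤ h) (a : ℝ) (ha : (h : ℝ) < a)
    (C : ℝ) (hC : 0 ≤ C) (K : ℕ) (hK : h ≤ K)
    (z : ℕ → ℝ) (hz : ∀ k, 0 ≤ z k)
    (hrec : ∀ k, K < k →
      z k ≤ (1 - a / (k : ℝ)) * z (k - h) + C / (k : ℝ) ^ 2) :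
    ∃ M : ℝ, 0 < M ∧ ∀ k : ℕ, 1 ≤ k → z k ≤ M / (k : ℝ) := by
  have hah : (0:ℝ) < a - h := by linarith
  set M0 : ℝ := ∑ i ∈ Finset.range (K+1), (i:ℝ) * z i with hM0
  have hM0nn : 0 ≤ M0 :=
    Finset.sum_nonneg (fun i _ => mul_nonneg (Nat.cast_nonneg i) (hz i))
  have hCd : 0 ≤ C / (a - h) := div_nonneg hC hah.le
  set M : ℝ := M0 + C/(a-h) + C + 1 with hMdef
  have hMpos : 0 < M := by positivity
  have hCM : C ≤ M * (a - h) := by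
    have hdd : C / (a-h) * (a-h) = C := div_mul_cancel₀ C hah.ne'
    rw [hMdef]
    nlinarith [mul_nonneg hM0nn hah.le, mul_nonneg hC hah.le]
  have hCleM : C ≤ M := by rw [hMdef]; linarith
  have hM0M : M0 ≤ M := by rw [hMdef]; linarith
  clear_value M0 M
  refine ⟨M, hMpos, ?_⟩
  intro k
  induction k using Nat.strong_induction_on with
  | _ k ih =>
    intro hk
    have hkpos : (0:ℝ) < (k:ℝ) := by exact_mod_cast hk
    by_cases hkK : k ≤ K
    · have h1 : (k:ℝ) * z k ≤ M0 := hM0 ▸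
        Finset.single_le_sum (f := fun (i : ℕ) => (i:ℝ) * z i)
          (fun (i : ℕ) _ => mul_nonneg (Nat.cast_nonneg i) (hz i))
          (Finset.mem_range.mpr (Nat.lt_succ_of_le hkK))
      rw [le_div_iff₀ hkpos]
      nlinarith [hMdef]
    · push_neg at hkK
      have hrk := hrec k hkK
      by_cases hs : 1 - a/(k:ℝ) ≤ 0
      · have h2 : (1 - a/(k:ℝ)) * z (k-h) ≤ 0 := mul_nonpos_of_nonpos_of_nonneg hs (hz _)
        have h3 : z k ≤ C / (k:ℝ)^2 := by linarith
        have h4 : C / (k:ℝ)^2 ≤ M / (k:ℝ) := by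
          rw [div_le_div_iff₀ (by positivity) hkpos]
          have hk1 : (1:ℝ) ≤ (k:ℝ) := by exact_mod_cast hk
          nlinarith [mul_nonneg (sub_nonneg.mpr hCleM) hkpos.le,
            mul_le_mul_of_nonneg_left hk1 (mul_nonneg hMpos.le hkpos.le)]
        linarith
      · push_neg at hs
        have hka : a < (k:ℝ) := by
          by_contra hcon
          push_neg at hcon
          have : 1 ≤ a / (k:ℝ) := (one_le_div hkpos).mpr hcon
          linarith
        have hkh1 : 1 ≤ k - h := by omega
        have hih := ih (k - h) (by omega) hkh1
        have hcast : ((k - h : ℕ) : ℝ) = (k:ℝ) - h := by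
          have hhk : h ≤ k := by omega
          push_cast [Nat.cast_sub hhk]
          ring
        rw [hcast] at hih
        have hth : (0:ℝ) < (k:ℝ) - h := by linarith
        have step : (1 - a/(k:ℝ)) * (M/((k:ℝ)-h)) + C/(k:ℝ)^2 ≤ M/(k:ℝ) := by
          rw [← sub_nonneg]
          have heq : M/(k:ℝ) - ((1 - a/(k:ℝ)) * (M/((k:ℝ)-h)) + C/(k:ℝ)^2)
              = (M*(a-(h:ℝ))*(k:ℝ) - C*((k:ℝ)-h)) / ((k:ℝ)^2*((k:ℝ)-h)) := by
            field_simp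
            ring
          rw [heq]
          apply div_nonneg _ (by positivity)
          nlinarith
        have hmono : (1 - a/(k:ℝ)) * z (k-h) ≤ (1 - a/(k:ℝ)) * (M/((k:ℝ)-h)) :=
          mul_le_mul_of_nonneg_left hih hs.le
        linarith
end

section
/- Let m, n, h be positive integers and f > 0, φ̄ > 0, δ > 0, λ₂ > 0. For l = 1, …, h and i = 1, …, m let φ_{l,i} ∈ ℝⁿ with ‖φ_{l,i}‖ ≤ φ̄, and suppose ∑_{i=1}^m ∑_{l=1}^h φ_{l,i} φ_{l,i}ᵀ ⪰ m·h·δ²·I_n. Let L ∈ ℝ^{m×m} be symmetric positive semidefinite with L𝟙 = 0 and xᵀLx ≥ λ₂‖x‖² for every x ∈ ℝ^m orthogonal to the all-ones vector 𝟙. For each l let D_l ∈ ℝ^{mn×mn} be the block-diagonal matrix with diagonal blocks φ_{l,1}φ_{l,1}ᵀ, …, φ_{l,m}φ_{l,m}ᵀ. Then λ_min( (f/h)·∑_{l=1}^h D_l + h·(L ⊗ I_n) ) ≥ h·f·λ₂·δ² / (2f·φ̄² + h·λ₂). -/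
open Matrix
open scoped Kronecker

private lemma dot_sum_mulVec {ι κ : Type*} [Fintype κ] (s : Finset ι)
    (M : ι → Matrix κ κ ℝ) (x : κ → ℝ) :
    x ⬝ᵥ ((∑ l ∈ s, M l) *ᵥ x) = ∑ l ∈ s, x ⬝ᵥ (M l *ᵥ x) := by
  classical
  induction s using Finset.induction_on with
  | empty => simp
  | insert _ _ hns ih => simp [Finset.sum_insert hns, Matrix.add_mulVec, dotProduct_add, ih]

private lemma quadD {m n : ℕ} (g : Fin m → Fin n → ℝ) (x : Fin m × Fin n → ℝ) :
    x ⬝ᵥ ((Matrix.of (fun p q : Fin m × Fin n =>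
      if p.1 = q.1 then g p.1 p.2 * g p.1 q.2 else 0)) *ᵥ x)
    = ∑ i, (∑ j, g i j * x (i, j))^2 := by
  simp only [dotProduct, mulVec, Fintype.sum_prod_type, Matrix.of_apply, ite_mul, zero_mul,
    Finset.sum_ite_eq, Finset.mem_univ, if_true, sq, Finset.sum_mul_sum]
  refine Finset.sum_congr rfl fun i _ => ?_
  have key : ∀ j : Fin n, (∑ i' : Fin m, ∑ j' : Fin n,
      if i = i' then g i j * g i j' * x (i', j') else 0)
      = ∑ j' : Fin n, g i j * g i j' * x (i, j') := by
    intro j; rw [Finset.sum_comm]; simp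
  simp only [key, Finset.mul_sum]
  exact Finset.sum_congr rfl fun j _ => Finset.sum_congr rfl fun j' _ => by ring

private lemma quadK {m n : ℕ} (L : Matrix (Fin m) (Fin m) ℝ) (x : Fin m × Fin n → ℝ) :
    x ⬝ᵥ ((L ⊗ₖ (1 : Matrix (Fin n) (Fin n) ℝ)) *ᵥ x)
    = ∑ j, (fun i => x (i, j)) ⬝ᵥ (L *ᵥ (fun i => x (i, j))) := by
  simp only [dotProduct, mulVec, Fintype.sum_prod_type, kroneckerMap_apply, one_apply,
    mul_ite, mul_one, mul_zero, ite_mul, zero_mul, Finset.sum_ite_eq, Finset.mem_univ, if_true]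
  exact Finset.sum_comm

private lemma quadOne {κ : Type*} [Fintype κ] [DecidableEq κ] (c : ℝ) (x : κ → ℝ) :
    x ⬝ᵥ ((c • (1 : Matrix κ κ ℝ)) *ᵥ x) = c * ∑ p, (x p)^2 := by
  simp [Matrix.smul_mulVec, Matrix.one_mulVec, dotProduct, smul_eq_mul, Finset.mul_sum, sq,
    mul_comm, mul_left_comm]

private lemma quadOuter {n : ℕ} (w v : Fin n → ℝ) :
    v ⬝ᵥ (Matrix.of (fun a b : Fin n => w a * w b) *ᵥ v) = (∑ j, w j * v j)^2 := by
  rw [sq, Finset.sum_mul]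
  simp only [dotProduct, mulVec, Matrix.of_apply, Finset.mul_sum]
  exact Finset.sum_congr rfl fun j _ => Finset.sum_congr rfl fun j' _ => by ring

private lemma sq_split (u a b : ℝ) (hu : 0 < u) :
    (1 - u) * a^2 - ((1 - u)/u) * b^2 ≤ (a + b)^2 := by
  have key : u * ((a + b)^2 - ((1 - u) * a^2 - (1 - u)/u * b^2)) = (u*a + b)^2 := by
    field_simp; ring
  nlinarith [sq_nonneg (u*a + b)]

private lemma final_arith (mr hr f φbar δ lam₂ X Y Sa Sb A B N : ℝ)
    (hmr : 0 < mr) (hhr : 0 < hr) (hf : 0 < f) (hφbar : 0 < φbar) (hlam₂ : 0 < lam₂)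
    (hδφ : δ^2 ≤ φbar^2) (hX0 : 0 ≤ X) (hY0 : 0 ≤ Y)
    (hSa0 : mr * hr * δ^2 * X ≤ Sa) (hSb0 : Sb ≤ hr * (φbar^2 * Y))
    (hAA : ∀ u : ℝ, 0 < u → u ≤ 1 → (1-u) * Sa - ((1-u)/u) * Sb ≤ A)
    (hB : lam₂ * Y ≤ B) (hN : N = mr * X + Y) :
    0 ≤ f / hr * A + hr * B - (hr * f * lam₂ * δ^2 / (2 * f * φbar^2 + hr * lam₂)) * N := by
  set T : ℝ := 2 * f * φbar^2 + hr * lam₂ with hT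
  have hT0 : 0 < T := by positivity
  set σ : ℝ := hr * f * lam₂ * δ^2 / T with hσdef
  set u : ℝ := 2 * f * φbar^2 / T with hu
  have hu0 : 0 < u := by positivity
  have hule : u ≤ 1 := by
    rw [hu, div_le_one hT0, hT]
    nlinarith [mul_pos hhr hlam₂]
  have hu1 : 1 - u = hr * lam₂ / T := by
    rw [hu, hT]; field_simp; ring
  have hcc : (1 - u) / u = hr * lam₂ / (2 * f * φbar^2) := by
    rw [hu1, hu]
    field_simp
  have hAu := hAA u hu0 hule
  have hσ2 : σ ≤ hr * lam₂ / 2 := by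
    rw [hσdef, div_le_div_iff₀ hT0 two_pos, hT]
    nlinarith [mul_nonneg (mul_nonneg (mul_nonneg hhr.le hlam₂.le) hf.le)
      (sub_nonneg.mpr hδφ), mul_pos (mul_pos hhr hlam₂) (mul_pos hhr hlam₂)]
  have e6 : f / hr * ((1-u) * (mr * hr * δ^2 * X)) = σ * (mr * X) := by
    rw [hu1, hσdef]; field_simp
  have e7 : f / hr * (((1-u)/u) * (hr * (φbar^2 * Y))) = hr * lam₂ / 2 * Y := by
    rw [hcc]; field_simp
  have t1 : (1-u) * (mr * hr * δ^2 * X) ≤ (1-u) * Sa :=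
    mul_le_mul_of_nonneg_left hSa0 (by rw [hu1]; positivity)
  have t2 : ((1-u)/u) * Sb ≤ ((1-u)/u) * (hr * (φbar^2 * Y)) :=
    mul_le_mul_of_nonneg_left hSb0 (by rw [hcc]; positivity)
  have t3 : f / hr * ((1-u) * (mr * hr * δ^2 * X) - ((1-u)/u) * (hr * (φbar^2 * Y)))
      ≤ f / hr * A := by
    refine mul_le_mul_of_nonneg_left ?_ (by positivity)
    linarith
  rw [mul_sub, e6, e7] at t3
  have t4 : σ * Y ≤ hr * lam₂ / 2 * Y := mul_le_mul_of_nonneg_right hσ2 hY0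
  have t5 : hr * (lam₂ * Y) ≤ hr * B := mul_le_mul_of_nonneg_left hB hhr.le
  rw [hN]
  nlinarith [t3, t4, t5]
/-- The deterministic core of step (lemmaV_k6) in the proof of the paper's Lemma 2: the
cooperative excitation condition on the regressors `φ_{l,i}` together with the spectral gap
`λ₂` of the Laplacian `L` yields
`λ_min((f/h) ∑ₗ Dₗ + h (L ⊗ Iₙ)) ≥ h f λ₂ δ² / (2 f φ̄² + h λ₂)`, where `Dₗ` is the block
diagonal matrix with blocks `φ_{l,1}φ_{l,1}ᵀ, …, φ_{l,m}φ_{l,m}ᵀ` and the eigenvalue bound is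
expressed via the positive semidefinite order. -/
theorem stmt17 (m n h : ℕ) (hm : 0 < m) (hn : 0 < n) (hh : 0 < h)
    (f φbar δ lam₂ : ℝ) (hf : 0 < f) (hφbar : 0 < φbar) (hδ : 0 < δ) (hlam₂ : 0 < lam₂)
    (φ : Fin h → Fin m → EuclideanSpace ℝ (Fin n))
    (hφ : ∀ l i, ‖φ l i‖ ≤ φbar)
    (hexc : ((∑ i, ∑ l, Matrix.of (fun x y : Fin n => φ l i x * φ l i y)) -
      ((m : ℝ) * h * δ ^ 2) • (1 : Matrix (Fin n) (Fin n) ℝ)).PosSemidef)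
    (L : Matrix (Fin m) (Fin m) ℝ)
    (hL : L.PosSemidef)
    (hL1 : L *ᵥ (fun _ => 1) = 0)
    (hgap : ∀ x : Fin m → ℝ, x ⬝ᵥ (fun _ => (1 : ℝ)) = 0 →
      lam₂ * (x ⬝ᵥ x) ≤ x ⬝ᵥ (L *ᵥ x))
    (D : Fin h → Matrix (Fin m × Fin n) (Fin m × Fin n) ℝ)
    (hD : ∀ l, D l = Matrix.of (fun p q : Fin m × Fin n =>
      if p.1 = q.1 then φ l p.1 p.2 * φ l p.1 q.2 else 0)) :
    (((f / h) • ∑ l, D l + (h : ℝ) • (L ⊗ₖ (1 : Matrix (Fin n) (Fin n) ℝ))) -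
      ((h : ℝ) * f * lam₂ * δ ^ 2 / (2 * f * φbar ^ 2 + h * lam₂)) •
        (1 : Matrix (Fin m × Fin n) (Fin m × Fin n) ℝ)).PosSemidef := by
  classical
  have hh' : (0:ℝ) < h := by exact_mod_cast hh
  have hm' : (0:ℝ) < m := by exact_mod_cast hm
  set T : ℝ := 2 * f * φbar ^ 2 + ↑h * lam₂ with hT
  have hT0 : 0 < T := by positivity
  set σ : ℝ := ↑h * f * lam₂ * δ ^ 2 / T with hσdef
  -- coordinatewise bound on φ
  have hφ2 : ∀ l i, (∑ j, (φ l i j)^2) ≤ φbar^2 := by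
    intro l i
    have h2 : ‖φ l i‖^2 = ∑ j, (φ l i j)^2 := by
      rw [EuclideanSpace.norm_eq, Real.sq_sqrt (by positivity)]
      simp [sq_abs]
    have h1 : ‖φ l i‖^2 ≤ φbar^2 := by nlinarith [norm_nonneg (φ l i), hφ l i]
    linarith [h2 ▸ h1]
  -- quadratic form of the excitation condition
  have hexcq : ∀ v : Fin n → ℝ, (↑m * ↑h * δ^2) * (∑ j, (v j)^2)
      ≤ ∑ i, ∑ l, (∑ j, φ l i j * v j)^2 := by
    intro v
    have h2 := hexc.dotProduct_mulVec_nonneg v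
    rw [star_trivial, Matrix.sub_mulVec, dotProduct_sub, quadOne, dot_sum_mulVec] at h2
    have h3 : ∀ i : Fin m,
        (v ⬝ᵥ ((∑ l, Matrix.of (fun a b : Fin n => φ l i a * φ l i b)) *ᵥ v))
        = ∑ l, (∑ j, φ l i j * v j)^2 := by
      intro i; rw [dot_sum_mulVec]
      exact Finset.sum_congr rfl fun l _ => quadOuter _ _
    simp only [h3] at h2
    linarith
  -- δ² ≤ φbar²
  have hδφ : δ^2 ≤ φbar^2 := by
    obtain ⟨j0⟩ := Fin.pos_iff_nonempty.mp hn
    have h1 := hexcq (fun j => if j = j0 then 1 else 0)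
    simp only [mul_ite, mul_one, mul_zero, Finset.sum_ite_eq', Finset.mem_univ, if_true,
      ite_pow, one_pow, zero_pow (by norm_num : (2:ℕ) ≠ 0)] at h1
    have h2 : ∀ l i, (φ l i j0)^2 ≤ φbar^2 := by
      intro l i
      refine le_trans ?_ (hφ2 l i)
      exact Finset.single_le_sum (f := fun j => (φ l i j)^2) (fun j _ => sq_nonneg _)
        (Finset.mem_univ j0)
    have h3 : (∑ i : Fin m, ∑ l : Fin h, (φ l i j0)^2) ≤ ↑m * ↑h * φbar^2 := by
      calc (∑ i : Fin m, ∑ l : Fin h, (φ l i j0)^2)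
          ≤ ∑ _i : Fin m, ∑ _l : Fin h, φbar^2 :=
            Finset.sum_le_sum fun i _ => Finset.sum_le_sum fun l _ => h2 l i
        _ = ↑m * ↑h * φbar^2 := by
            simp [Finset.sum_const, Finset.card_univ]; ring
    nlinarith [mul_pos hm' hh']
  -- symmetry of L entries
  have hLsym : ∀ i i', L i i' = L i' i := by
    intro i i'
    have := hL.1
    rw [Matrix.IsHermitian] at this
    have h4 := congrFun (congrFun this i) i'
    simpa [Matrix.conjTranspose_apply] using h4.symm
  refine Matrix.PosSemidef.of_dotProduct_mulVec_nonneg ?_ ?_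
  · -- Hermitian
    have hDH : ∀ l, (D l)ᴴ = D l := by
      intro l; ext ⟨i, j⟩ ⟨i', j'⟩
      simp only [Matrix.conjTranspose_apply, hD, Matrix.of_apply, star_trivial]
      rcases eq_or_ne i i' with e | e
      · subst e; simp [mul_comm]
      · simp [e, Ne.symm e]
    have hKH : (L ⊗ₖ (1 : Matrix (Fin n) (Fin n) ℝ))ᴴ = L ⊗ₖ 1 := by
      ext ⟨i, j⟩ ⟨i', j'⟩
      simp only [Matrix.conjTranspose_apply, Matrix.kroneckerMap_apply, Matrix.one_apply,
        star_trivial, hLsym i' i]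
      rcases eq_or_ne j j' with e | e
      · subst e; simp
      · simp [e, Ne.symm e]
    show _ᴴ = _
    rw [Matrix.conjTranspose_sub, Matrix.conjTranspose_add, Matrix.conjTranspose_smul,
      Matrix.conjTranspose_smul, Matrix.conjTranspose_smul, Matrix.conjTranspose_one,
      Matrix.conjTranspose_sum]
    simp only [star_trivial, hKH]
    congr 1
    congr 1
    exact congrArg _ (Finset.sum_congr rfl fun l _ => hDH l)
  · intro x
    rw [star_trivial, Matrix.sub_mulVec, dotProduct_sub, Matrix.add_mulVec, dotProduct_add,
      Matrix.smul_mulVec, Matrix.smul_mulVec, dotProduct_smul, dotProduct_smul,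
      quadOne, dot_sum_mulVec, quadK]
    have hDq : ∀ l : Fin h, x ⬝ᵥ (D l *ᵥ x) = ∑ i, (∑ j, φ l i j * x (i, j))^2 := by
      intro l; rw [hD l]; exact quadD (fun i j => φ l i j) x
    simp only [hDq, smul_eq_mul]
    -- decomposition into mean and fluctuation
    set xb : Fin n → ℝ := fun j => (∑ i, x (i, j)) / m with hxb
    set y : Fin m → Fin n → ℝ := fun i j => x (i, j) - xb j with hy
    set X : ℝ := ∑ j, (xb j)^2 with hX
    set Y : ℝ := ∑ i, ∑ j, (y i j)^2 with hY
    have hX0 : 0 ≤ X := Finset.sum_nonneg fun j _ => sq_nonneg _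
    have hY0 : 0 ≤ Y := Finset.sum_nonneg fun i _ =>
      Finset.sum_nonneg fun j _ => sq_nonneg _
    have hy0 : ∀ j, ∑ i, y i j = 0 := by
      intro j
      simp only [hy, Finset.sum_sub_distrib, Finset.sum_const, Finset.card_univ,
        Fintype.card_fin, nsmul_eq_mul, hxb]
      field_simp; ring
    have hN : (∑ p : Fin m × Fin n, (x p)^2) = ↑m * X + Y := by
      rw [Fintype.sum_prod_type]
      have e1 : ∀ i j, (x (i, j))^2 = (xb j)^2 + (2 * xb j) * (y i j) + (y i j)^2 := by
        intro i j; simp only [hy]; ring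
      calc (∑ i, ∑ j, (x (i, j))^2)
          = ∑ i, ∑ j, ((xb j)^2 + (2 * xb j) * (y i j) + (y i j)^2) := by
            exact Finset.sum_congr rfl fun i _ => Finset.sum_congr rfl fun j _ => e1 i j
        _ = (∑ i : Fin m, ∑ j, (xb j)^2) + (∑ i, ∑ j, (2 * xb j) * (y i j)) + Y := by
            simp [Finset.sum_add_distrib, hY]
        _ = ↑m * X + Y := by
            have e2 : (∑ _i : Fin m, ∑ j, (xb j)^2) = ↑m * X := by
              simp [Finset.sum_const, Finset.card_univ, hX]
            have e3 : (∑ i, ∑ j, (2 * xb j) * (y i j)) = 0 := by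
              rw [Finset.sum_comm]
              refine Finset.sum_eq_zero fun j _ => ?_
              rw [← Finset.mul_sum, hy0 j, mul_zero]
            rw [e2, e3, add_zero]
    -- Laplacian bound
    have hB : ∀ j, lam₂ * (∑ i, (y i j)^2)
        ≤ (fun i => x (i, j)) ⬝ᵥ (L *ᵥ (fun i => x (i, j))) := by
      intro j
      set yj : Fin m → ℝ := fun i => y i j with hyj
      have hperp : yj ⬝ᵥ (fun _ => (1:ℝ)) = 0 := by
        rw [show yj ⬝ᵥ (fun _ => (1:ℝ)) = ∑ i, y i j from
          Finset.sum_congr rfl fun i _ => mul_one _, hy0 j]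
      have hgapj := hgap yj hperp
      have hyy : yj ⬝ᵥ yj = ∑ i, (y i j)^2 := by simp [dotProduct, sq]; rfl
      have hcol : (fun i => x (i, j)) = yj + (xb j) • (fun _ => (1:ℝ)) := by
        funext i; simp [hyj, hy]
      have hone : (fun _ => (1:ℝ)) ⬝ᵥ (L *ᵥ yj) = 0 := by
        have h0 : ∀ k, (∑ i, L i k) = 0 := by
          intro k
          have h5 := congrFun hL1 k
          simp only [mulVec, dotProduct, mul_one, Pi.zero_apply] at h5
          calc (∑ i, L i k) = ∑ i, L k i := Finset.sum_congr rfl fun i _ => hLsym i k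
            _ = 0 := h5
        simp only [dotProduct, mulVec, one_mul]
        rw [Finset.sum_comm]
        refine Finset.sum_eq_zero fun k _ => ?_
        have : (∑ i : Fin m, L i k * yj k) = (∑ i, L i k) * yj k := by
          rw [Finset.sum_mul]
        rw [this, h0 k, zero_mul]
      have hquad : (fun i => x (i, j)) ⬝ᵥ (L *ᵥ (fun i => x (i, j))) = yj ⬝ᵥ (L *ᵥ yj) := by
        rw [hcol, Matrix.mulVec_add, Matrix.mulVec_smul, hL1, smul_zero, add_zero,
          add_dotProduct, smul_dotProduct, hone, smul_zero, add_zero]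
      rw [hquad, ← hyy]
      exact hgapj
    have hBB : lam₂ * Y ≤ ∑ j, (fun i => x (i, j)) ⬝ᵥ (L *ᵥ (fun i => x (i, j))) := by
      have e4 : lam₂ * Y = ∑ j, lam₂ * (∑ i, (y i j)^2) := by
        rw [hY, Finset.sum_comm, Finset.mul_sum]
      rw [e4]
      exact Finset.sum_le_sum fun j _ => hB j
    -- split the regressor quadratic form
    set a : Fin h → Fin m → ℝ := fun l i => ∑ j, φ l i j * xb j with ha
    set b : Fin h → Fin m → ℝ := fun l i => ∑ j, φ l i j * y i j with hb
    have hsplit : ∀ l i, (∑ j, φ l i j * x (i, j)) = a l i + b l i := by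
      intro l i
      rw [ha, hb, ← Finset.sum_add_distrib]
      refine Finset.sum_congr rfl fun j _ => ?_
      simp only [hy]; ring
    have hSa0 : (↑m * ↑h * δ^2) * X ≤ ∑ l, ∑ i, (a l i)^2 := by
      have := hexcq xb
      rw [Finset.sum_comm]
      exact this
    have hbb : ∀ l i, (b l i)^2 ≤ φbar^2 * ∑ j, (y i j)^2 := by
      intro l i
      calc (b l i)^2 ≤ (∑ j, (φ l i j)^2) * (∑ j, (y i j)^2) :=
            Finset.sum_mul_sq_le_sq_mul_sq _ _ _
        _ ≤ φbar^2 * ∑ j, (y i j)^2 :=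
            mul_le_mul_of_nonneg_right (hφ2 l i)
              (Finset.sum_nonneg fun j _ => sq_nonneg _)
    have hSb0 : (∑ l, ∑ i, (b l i)^2) ≤ ↑h * (φbar^2 * Y) := by
      calc (∑ l, ∑ i, (b l i)^2) ≤ ∑ l : Fin h, ∑ i, (φbar^2 * ∑ j, (y i j)^2) :=
            Finset.sum_le_sum fun l _ => Finset.sum_le_sum fun i _ => hbb l i
        _ = ↑h * (φbar^2 * Y) := by
            rw [hY]
            simp [← Finset.mul_sum, Finset.sum_const, Finset.card_univ]
    have hAgen : ∀ u : ℝ, 0 < u → u ≤ 1 →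
        (1 - u) * (∑ l, ∑ i, (a l i)^2) - ((1 - u)/u) * (∑ l, ∑ i, (b l i)^2)
          ≤ ∑ l, ∑ i, (∑ j, φ l i j * x (i, j))^2 := by
      intro u hu _
      have e5 : (1 - u) * (∑ l, ∑ i, (a l i)^2) - ((1 - u)/u) * (∑ l, ∑ i, (b l i)^2)
          = ∑ l, ∑ i, ((1 - u) * (a l i)^2 - ((1 - u)/u) * (b l i)^2) := by
        simp only [Finset.sum_sub_distrib, Finset.mul_sum]
      rw [e5]
      refine Finset.sum_le_sum fun l _ => Finset.sum_le_sum fun i _ => ?_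
      rw [hsplit l i]
      exact sq_split u (a l i) (b l i) hu
    exact final_arith (↑m) (↑h) f φbar δ lam₂ X Y _ _ _ _ _ hm' hh' hf hφbar hlam₂
      hδφ hX0 hY0 hSa0 hSb0 hAgen hBB hN
end
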